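/- arXiv:2303.17931 — 6 statements merged into one kernel-verified Lean document; each statement's English description precedes it below -/
import Mathlib

section
/- The number of permutations of {1,2,...,n} whose disjoint cycle decomposition contains exactly k adjacent q-cycles equals \sum_{j=k}^{\lfloor n/q \rfloor} (-1)^{k+j} \binom{j}{k} (n-(q-1)j)!/j!. -/
open Finset

def IsAdjCycle {n : ℕ} (q : ℕ) (π : Equiv.Perm (Fin n)) (i : ℕ) : Prop :=
  i + q ≤ n ∧
  (∀ j : Fin n, i ≤ (j : ℕ) → (j : ℕ) + 1 < i + q → ((π j : ℕ) = (j : ℕ) + 1)) ∧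
  (∀ j : Fin n, (j : ℕ) = i + q - 1 → (π j : ℕ) = i)

instance {n : ℕ} (q : ℕ) (π : Equiv.Perm (Fin n)) (i : ℕ) : Decidable (IsAdjCycle q π i) := by
  unfold IsAdjCycle; infer_instance

/-- admissible set of starting positions -/
def adm (q n : ℕ) (S : Finset ℕ) : Prop :=
  (∀ i ∈ S, i + q ≤ n) ∧ ∀ i ∈ S, ∀ i' ∈ S, i < i' → i + q ≤ i'

instance (q n : ℕ) (S : Finset ℕ) : Decidable (adm q n S) := by
  unfold adm; infer_instance

/-- two overlapping adjacent cycles cannot coexist -/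
lemma no_overlap {n q : ℕ} (hq : 1 ≤ q) {π : Equiv.Perm (Fin n)} {i i' : ℕ}
    (h : IsAdjCycle q π i) (h' : IsAdjCycle q π i') (hlt : i < i') (hov : i' < i + q) : False := by
  obtain ⟨hn, hmid, hend⟩ := h
  obtain ⟨hn', hmid', hend'⟩ := h'
  have hxlt : i + q - 1 < n := by omega
  set x : Fin n := ⟨i + q - 1, hxlt⟩ with hxdef
  have hx1 : (π x : ℕ) = i := hend x (by simp [hxdef])
  -- from cycle i' : i' ≤ x
  have hle : i' ≤ (x : ℕ) := by simp [hxdef]; omega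
  rcases lt_or_eq_of_le (show (x : ℕ) + 1 ≤ i' + q by simp [hxdef]; omega) with hc | hc
  · have := hmid' x hle hc
    omega
  · have := hend' x (by omega)
    omega

lemma adjCycle_lt {n q : ℕ} (hq : 1 ≤ q) {π : Equiv.Perm (Fin n)} {i : ℕ}
    (h : IsAdjCycle q π i) : i < n := by
  have := h.1; omega

/-- the set of starts of adjacent q-cycles of π -/
def Aset {n : ℕ} (q : ℕ) (π : Equiv.Perm (Fin n)) : Finset ℕ :=
  (Finset.range n).filter (IsAdjCycle q π)

lemma mem_Aset {n q : ℕ} (hq : 1 ≤ q) {π : Equiv.Perm (Fin n)} {i : ℕ} :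
    i ∈ Aset q π ↔ IsAdjCycle q π i := by
  simp only [Aset, mem_filter, mem_range]
  exact ⟨fun h => h.2, fun h => ⟨adjCycle_lt hq h, h⟩⟩

lemma adm_Aset {n q : ℕ} (hq : 1 ≤ q) (π : Equiv.Perm (Fin n)) : adm q n (Aset q π) := by
  constructor
  · intro i hi; exact ((mem_Aset hq).1 hi).1
  · intro i hi i' hi' hlt
    by_contra hcon
    exact no_overlap hq ((mem_Aset hq).1 hi) ((mem_Aset hq).1 hi') hlt (by omega)

lemma nat_card_adj {n q : ℕ} (hq : 1 ≤ q) (π : Equiv.Perm (Fin n)) :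
    Nat.card {i : ℕ // IsAdjCycle q π i} = (Aset q π).card := by
  have e : {i : ℕ // IsAdjCycle q π i} ≃ {i // i ∈ Aset q π} :=
    Equiv.subtypeEquivRight (fun i => (mem_Aset hq).symm)
  rw [Nat.card_congr e, Nat.card_eq_fintype_card, Fintype.card_coe]


def inBlock (q : ℕ) (S : Finset ℕ) (x : ℕ) : Prop := ∃ i ∈ S, i ≤ x ∧ x < i + q

instance (q : ℕ) (S : Finset ℕ) (x : ℕ) : Decidable (inBlock q S x) := by
  unfold inBlock; infer_instance

/-- the forced function on blocks -/
def g0 (q : ℕ) (S : Finset ℕ) (x : ℕ) : ℕ :=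
  if q ≤ x + 1 ∧ x + 1 - q ∈ S then x + 1 - q
  else if inBlock q S x then x + 1 else x

section
variable {q n : ℕ} {S : Finset ℕ} (hq : 1 ≤ q) (hS : adm q n S)
include hq hS

/-- block starts don't clash: x can't be both a non-final element of a block and final of another -/
lemma not_end_of_mid {i x : ℕ} (hi : i ∈ S) (h1 : i ≤ x) (h2 : x + 1 < i + q) :
    ¬(q ≤ x + 1 ∧ x + 1 - q ∈ S) := by
  rintro ⟨hle, hmem⟩
  have hne : x + 1 - q < i := by omega
  have := hS.2 _ hmem _ hi hne
  omega

lemma g0_mid {i x : ℕ} (hi : i ∈ S) (h1 : i ≤ x) (h2 : x + 1 < i + q) :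
    g0 q S x = x + 1 := by
  rw [g0, if_neg (not_end_of_mid hq hS hi h1 h2), if_pos ⟨i, hi, h1, by omega⟩]

lemma g0_end {i : ℕ} (hi : i ∈ S) : g0 q S (i + q - 1) = i := by
  rw [g0, if_pos ⟨by omega, by simpa [show i + q - 1 + 1 - q = i by omega]⟩]
  omega

lemma g0_out {x : ℕ} (hx : ¬ inBlock q S x) : g0 q S x = x := by
  rw [g0, if_neg, if_neg hx]
  rintro ⟨hle, hmem⟩
  exact hx ⟨x + 1 - q, hmem, by omega, by omega⟩

lemma g0_lt {x : ℕ} (hx : x < n) : g0 q S x < n := by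
  rw [g0]
  by_cases hend : q ≤ x + 1 ∧ x + 1 - q ∈ S
  · rw [if_pos hend]; have := hS.1 _ hend.2; omega
  · rw [if_neg hend]
    by_cases hin : inBlock q S x
    · rw [if_pos hin]
      obtain ⟨i, hi, h1, h2⟩ := hin
      have h3 := hS.1 _ hi
      have h4 : x + 1 ≠ i + q := fun he => hend ⟨by omega, by
        simpa [show x + 1 - q = i by omega] using hi⟩
      omega
    · rw [if_neg hin]; exact hx

lemma g0_inj {x y : ℕ} (hx : x < n) (hy : y < n) (hxy : g0 q S x = g0 q S y) : x = y := by
  -- use left inverse h0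
  classical
  let h0 : ℕ → ℕ := fun z => if z ∈ S then z + q - 1 else
    if ∃ i ∈ S, i < z ∧ z < i + q then z - 1 else z
  have key : ∀ z, h0 (g0 q S z) = z := by
    intro z
    by_cases hend : q ≤ z + 1 ∧ z + 1 - q ∈ S
    · rw [g0, if_pos hend]
      show (if z + 1 - q ∈ S then _ else _) = z
      rw [if_pos hend.2]
      omega
    · by_cases hin : inBlock q S z
      · rw [g0, if_neg hend, if_pos hin]
        show (if z + 1 ∈ S then _ else _) = z
        obtain ⟨i, hi, h1, h2⟩ := hin
        have hz2 : z + 1 < i + q := by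
          rcases lt_or_eq_of_le (show z + 1 ≤ i + q by omega) with h | h
          · exact h
          · exfalso; exact hend ⟨by omega, by simpa [show z + 1 - q = i by omega]⟩
        have hnotS : z + 1 ∉ S := by
          intro hmem
          have := hS.2 _ hi _ hmem (by omega)
          omega
        rw [if_neg hnotS, if_pos ⟨i, hi, by omega, by omega⟩]
        omega
      · rw [g0, if_neg hend, if_neg hin]
        show (if z ∈ S then _ else _) = z
        have hnotS : z ∉ S := fun hmem => hin ⟨z, hmem, le_refl _, by omega⟩
        rw [if_neg hnotS, if_neg]
        rintro ⟨i, hi, h1, h2⟩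
        exact hin ⟨i, hi, by omega, h2⟩
  have := congrArg h0 hxy
  rwa [key, key] at this

/-- the forced permutation -/
noncomputable def sigma0 : Equiv.Perm (Fin n) := by
  classical
  exact Equiv.ofBijective (fun x => ⟨g0 q S x, g0_lt hq hS x.2⟩)
    (Finite.injective_iff_bijective.mp (fun x y hxy => Fin.ext (g0_inj hq hS x.2 y.2 (by
      simpa using congrArg Fin.val hxy))))

lemma sigma0_apply (x : Fin n) : ((sigma0 hq hS x : Fin n) : ℕ) = g0 q S x := by
  simp [sigma0, Equiv.ofBijective]

end


section
variable {q n : ℕ} {S : Finset ℕ} (hq : 1 ≤ q) (hS : adm q n S)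

include hq hS in
lemma forced_iff (π : Equiv.Perm (Fin n)) :
    (∀ i ∈ S, IsAdjCycle q π i) ↔
      (∀ x : Fin n, inBlock q S (x : ℕ) → π x = sigma0 hq hS x) := by
  constructor
  · intro h x hx
    obtain ⟨i, hi, h1, h2⟩ := hx
    obtain ⟨hn, hmid, hend⟩ := h i hi
    apply Fin.ext
    rcases lt_or_eq_of_le (show (x : ℕ) + 1 ≤ i + q by omega) with hc | hc
    · rw [hmid x h1 hc, sigma0_apply, g0_mid hq hS hi h1 hc]
    · rw [hend x (by omega), sigma0_apply,
        show (x : ℕ) = i + q - 1 by omega, g0_end hq hS hi]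
  · intro h i hi
    refine ⟨hS.1 _ hi, fun j h1 h2 => ?_, fun j hj => ?_⟩
    · rw [h j ⟨i, hi, h1, by omega⟩, sigma0_apply, g0_mid hq hS hi h1 h2]
    · have hn := hS.1 _ hi
      rw [h j ⟨i, hi, by omega, by omega⟩, sigma0_apply,
        show (j : ℕ) = i + q - 1 from hj, g0_end hq hS hi]

include hq hS in
lemma blocks_card_fin :
    Fintype.card {x : Fin n // inBlock q S (x : ℕ)} = q * S.card := by
  classical
  have h1 : Fintype.card {x : Fin n // inBlock q S (x : ℕ)} =
      ((range n).filter (inBlock q S)).card := by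
    rw [Fintype.card_subtype]
    refine Finset.card_bij (fun x _ => (x : ℕ)) ?_ ?_ ?_
    · intro a ha
      simp only [mem_filter, mem_univ, true_and] at ha ⊢
      simp only [mem_range]
      exact ⟨a.2, ha⟩
    · intro a _ b _ hab; exact Fin.ext hab
    · intro b hb
      simp only [mem_filter, mem_range] at hb
      exact ⟨⟨b, hb.1⟩, by simp [hb.2], rfl⟩
  rw [h1]
  have h2 : (range n).filter (inBlock q S) = S.biUnion (fun i => Ico i (i + q)) := by
    ext x
    simp only [mem_filter, mem_range, mem_biUnion, mem_Ico, inBlock]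
    constructor
    · rintro ⟨_, i, hi, h1, h2⟩; exact ⟨i, hi, h1, h2⟩
    · rintro ⟨i, hi, h1, h2⟩
      have := hS.1 _ hi
      exact ⟨by omega, i, hi, h1, h2⟩
  have hdisj : ∀ i ∈ S, ∀ i' ∈ S, i ≠ i' →
      Disjoint (Ico i (i + q)) (Ico i' (i' + q)) := by
    intro i hi i' hi' hne
    rw [Finset.disjoint_left]
    intro a ha ha'
    simp only [mem_Ico] at ha ha'
    rcases Nat.lt_or_ge i i' with h | h
    · have := hS.2 _ hi _ hi' h; omega
    · rcases Nat.lt_or_ge i' i with h' | h'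
      · have := hS.2 _ hi' _ hi h'; omega
      · exact hne (by omega)
  rw [h2, Finset.card_biUnion hdisj,
    Finset.sum_congr rfl (fun i (_ : i ∈ S) => (by rw [Nat.card_Ico]; omega : (Ico i (i + q)).card = q)),
    Finset.sum_const, smul_eq_mul, Nat.mul_comm]

include hq hS in
lemma card_forced :
    ((Finset.univ.filter
        (fun π : Equiv.Perm (Fin n) => ∀ i ∈ S, IsAdjCycle q π i)).card : ℕ) =
      Nat.factorial (n - q * S.card) := by
  classical
  rw [← Fintype.card_subtype]
  have e1 : {π : Equiv.Perm (Fin n) // ∀ i ∈ S, IsAdjCycle q π i} ≃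
      {π : Equiv.Perm (Fin n) // ∀ x : Fin n, inBlock q S (x : ℕ) → π x = sigma0 hq hS x} :=
    Equiv.subtypeEquivRight (fun π => forced_iff hq hS π)
  have e2 : {π : Equiv.Perm (Fin n) // ∀ x : Fin n, inBlock q S (x : ℕ) → π x = sigma0 hq hS x} ≃
      {ρ : Equiv.Perm (Fin n) // ∀ x : Fin n, inBlock q S (x : ℕ) → ρ x = x} := by
    refine (Equiv.mulLeft (sigma0 hq hS)⁻¹).subtypeEquiv (fun π => ?_)
    simp only [Equiv.coe_mulLeft, Equiv.Perm.mul_apply]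
    constructor
    · intro h x hx
      rw [h x hx]
      simp
    · intro h x hx
      have h2 := congrArg (sigma0 hq hS) (h x hx)
      simpa using h2
  have e3 : {ρ : Equiv.Perm (Fin n) // ∀ x : Fin n, inBlock q S (x : ℕ) → ρ x = x} ≃
      Equiv.Perm {x : Fin n // ¬ inBlock q S (x : ℕ)} := by
    refine Equiv.symm ?_
    refine (Equiv.Perm.subtypeEquivSubtypePerm (fun x : Fin n => ¬ inBlock q S (x : ℕ))).trans
      (Equiv.subtypeEquivRight (fun ρ => ?_))
    constructor
    · intro h x hx; exact h x (not_not_intro hx)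
    · intro h x hx; exact h x (not_not.mp hx)
  rw [Fintype.card_congr (e1.trans (e2.trans e3)), Fintype.card_perm,
    Fintype.card_subtype_compl, blocks_card_fin hq hS, Fintype.card_fin]

end

lemma card_forced_zero {q n : ℕ} {S : Finset ℕ} (hq : 1 ≤ q) (hnadm : ¬ adm q n S) :
    (Finset.univ.filter
        (fun π : Equiv.Perm (Fin n) => ∀ i ∈ S, IsAdjCycle q π i)).card = 0 := by
  rw [Finset.card_eq_zero, Finset.filter_eq_empty_iff]
  intro π _ hP
  apply hnadm
  refine ⟨fun i hi => (hP i hi).1, fun i hi i' hi' hlt => ?_⟩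
  by_contra hcon
  exact no_overlap hq (hP i hi) (hP i' hi') hlt (by omega)

/-- number of admissible starting-sets of size `j` -/
lemma count_adm (q : ℕ) (hq : 1 ≤ q) :
    ∀ n j : ℕ, (((Finset.range n).powersetCard j).filter (adm q n)).card =
      (n - (q - 1) * j).choose j := by
  intro n
  induction n using Nat.strong_induction_on with
  | _ n IH =>
    intro j
    match j with
    | 0 =>
      rw [Finset.powersetCard_zero]
      rw [Finset.filter_true_of_mem (fun S hS => by
        rw [Finset.mem_singleton] at hS
        subst hS
        exact (⟨by simp, by simp⟩ : adm q n ∅))]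
      simp
    | (j + 1) =>
      match n, q, hq with
      | 0, q, hq =>
        rw [Finset.range_zero, Finset.filter_eq_empty_iff.mpr (fun S hS => by
          rw [Finset.powersetCard_eq_empty.mpr (by simp)] at hS
          exact absurd hS (Finset.notMem_empty S))]
        simp
      | (n + 1), q, hq =>
        by_cases hnq : n + 1 < q
        · -- no admissible sets
          have h0 : (((Finset.range (n+1)).powersetCard (j+1)).filter (adm q (n+1))) = ∅ := by
            rw [Finset.filter_eq_empty_iff]
            intro S hS hadm
            rw [Finset.mem_powersetCard] at hS
            obtain ⟨i, hi⟩ := Finset.card_pos.mp (by omega : 0 < S.card)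
            have := hadm.1 i hi
            omega
          rw [h0, Finset.card_empty]
          have ha : (q-1)*(j+1) = (q-1)*j + (q-1) := by ring
          have hb : (q-1) ≤ (q-1)*(j+1) := by omega
          rw [eq_comm, Nat.choose_eq_zero_iff]
          omega
        · -- n + 1 ≥ q : recursion
          push_neg at hnq
          set m := n + 1 - q with hm
          set T := ((Finset.range (n+1)).powersetCard (j+1)).filter (adm q (n+1)) with hT
          have hsplit : T.card =
              (T.filter (fun S => m ∈ S)).card + (T.filter (fun S => m ∉ S)).card := by
            rw [Finset.card_filter_add_card_filter_not]
          have hwithout : T.filter (fun S => m ∉ S) =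
              ((Finset.range n).powersetCard (j+1)).filter (adm q n) := by
            ext S
            simp only [hT, Finset.mem_filter, Finset.mem_powersetCard]
            constructor
            · rintro ⟨⟨⟨hsub, hcard⟩, hadm⟩, hnot⟩
              refine ⟨⟨fun i hi => ?_, hcard⟩, ⟨fun i hi => ?_, hadm.2⟩⟩
              · have h1 := hadm.1 i hi
                have h2 : i ≠ m := fun he => hnot (he ▸ hi)
                exact Finset.mem_range.mpr (by omega)
              · have h1 := hadm.1 i hi
                have h2 : i ≠ m := fun he => hnot (he ▸ hi)
                omega
            · rintro ⟨⟨hsub, hcard⟩, hadm⟩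
              refine ⟨⟨⟨fun i hi => Finset.mem_range.mpr
                  (by have := Finset.mem_range.mp (hsub hi); omega), hcard⟩,
                ⟨fun i hi => by have := hadm.1 i hi; omega, hadm.2⟩⟩, fun hmem => ?_⟩
              have := hadm.1 m hmem
              omega
          have hwith : (T.filter (fun S => m ∈ S)).card =
              (((Finset.range m).powersetCard j).filter (adm q m)).card := by
            refine Finset.card_bij (fun S _ => S.erase m) ?_ ?_ ?_
            · intro S hSmem
              simp only [hT, Finset.mem_filter, Finset.mem_powersetCard] at hSmem ⊢
              obtain ⟨⟨⟨hsub, hcard⟩, hadm⟩, hmemS⟩ := hSmem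
              have hlt : ∀ i ∈ S.erase m, i < m := by
                intro i hi
                rw [Finset.mem_erase] at hi
                have := hadm.1 i hi.2
                omega
              refine ⟨⟨fun i hi => Finset.mem_range.mpr (hlt i hi), ?_⟩, ?_, ?_⟩
              · rw [Finset.card_erase_of_mem hmemS, hcard]
                omega

              · intro i hi
                rw [Finset.mem_erase] at hi
                exact hadm.2 i hi.2 m hmemS (by have := hadm.1 i hi.2; omega)
              · intro i hi i' hi' hlt'
                rw [Finset.mem_erase] at hi hi'
                exact hadm.2 i hi.2 i' hi'.2 hlt'
            · intro S1 h1 S2 h2 he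
              rw [Finset.mem_filter] at h1 h2
              rw [← Finset.insert_erase h1.2, show S1.erase m = S2.erase m from he,
                Finset.insert_erase h2.2]
            · intro S' hS'
              simp only [Finset.mem_filter, Finset.mem_powersetCard] at hS'
              obtain ⟨⟨hsub', hcard'⟩, hadm'⟩ := hS'
              have hltm : ∀ i ∈ S', i < m := fun i hi => Finset.mem_range.mp (hsub' hi)
              have hnm : m ∉ S' := fun h => lt_irrefl m (hltm m h)
              refine ⟨insert m S', ?_, Finset.erase_insert hnm⟩
              simp only [hT, Finset.mem_filter, Finset.mem_powersetCard]
              refine ⟨⟨⟨fun i hi => ?_, ?_⟩, ⟨fun i hi => ?_, fun i hi i' hi' hlt' => ?_⟩⟩,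
                Finset.mem_insert_self m S'⟩
              · rw [Finset.mem_insert] at hi
                rcases hi with h | h
                · exact Finset.mem_range.mpr (by omega)
                · exact Finset.mem_range.mpr (by have := hltm i h; omega)
              · rw [Finset.card_insert_of_notMem hnm, hcard']
              · rw [Finset.mem_insert] at hi
                rcases hi with h | h
                · omega
                · have := hadm'.1 i h; omega
              · rw [Finset.mem_insert] at hi hi'
                rcases hi with h | h <;> rcases hi' with h' | h'
                · omega
                · exfalso; have := hltm i' h'; omega
                · have := hadm'.1 i h; omega
                · exact hadm'.2 i h i' h' hlt'
          have hmlt : m < n + 1 := by omega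
          rw [hsplit, hwith, hwithout, IH m hmlt j, IH n (by omega) (j+1)]
          have ha : (q-1)*(j+1) = (q-1)*j + (q-1) := by ring
          by_cases hc : (q-1)*(j+1) < n+1
          · have h1 : n + 1 - (q-1)*(j+1) = (n - (q-1)*(j+1)) + 1 := by omega
            have h2 : m - (q-1)*j = n - (q-1)*(j+1) := by omega
            rw [h1, h2, Nat.choose_succ_succ, Nat.add_comm]
          · rcases Nat.eq_zero_or_pos j with hj0 | hj1
            · subst hj0
              have : (q-1)*(0+1) = q - 1 := by ring
              omega
            · rw [Nat.choose_eq_zero_of_lt (by omega),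
                Nat.choose_eq_zero_of_lt (by omega),
                Nat.choose_eq_zero_of_lt (by omega)]

lemma Aset_card_le {n q : ℕ} (hq : 1 ≤ q) (π : Equiv.Perm (Fin n)) :
    (Aset q π).card ≤ n / q := by
  have h1 := blocks_card_fin hq (adm_Aset hq π)
  have h2 : Fintype.card {x : Fin n // inBlock q (Aset q π) (x : ℕ)} ≤ n := by
    calc Fintype.card {x : Fin n // inBlock q (Aset q π) (x : ℕ)}
        ≤ Fintype.card (Fin n) := Fintype.card_subtype_le _
      _ = n := Fintype.card_fin n
  rw [Nat.le_div_iff_mul_le (by omega : 0 < q), Nat.mul_comm]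
  omega

lemma alt_sum (k M m : ℕ) (hm : m ≤ M) :
    ∑ j ∈ Finset.Icc k M, (-1:ℚ)^(k+j) * (j.choose k) * (m.choose j)
      = if m = k then 1 else 0 := by
  rcases Nat.lt_or_ge m k with hmk | hmk
  · rw [Finset.sum_eq_zero, if_neg (by omega)]
    intro j hj
    rw [Finset.mem_Icc] at hj
    rw [Nat.choose_eq_zero_of_lt (by omega : m < j)]
    push_cast; ring
  · have hIcc : Finset.Icc k M = Finset.Ico k (M+1) := by rw [Finset.Ico_add_one_right_eq_Icc]
    rw [hIcc, Finset.sum_Ico_eq_sum_range]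
    have hterm : ∀ d, (-1:ℚ)^(k+(k+d)) * ((k+d).choose k) * (m.choose (k+d))
        = (m.choose k : ℚ) * ((-1)^d * ((m-k).choose d)) := by
      intro d
      have hsign : (-1:ℚ)^(k+(k+d)) = (-1)^d := by
        rw [show k+(k+d) = 2*k + d by ring, pow_add, pow_mul]
        norm_num
      have hch : (k+d).choose k * (m.choose (k+d)) = m.choose k * ((m-k).choose d) := by
        rcases le_or_gt (k+d) m with h | h
        · have h2 := Nat.choose_mul (n := m) (Nat.le_add_right k d)
          rw [show k + d - k = d by omega] at h2
          rw [Nat.mul_comm]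
          exact h2
        · rw [Nat.choose_eq_zero_of_lt h, Nat.choose_eq_zero_of_lt (by omega : m - k < d),
            Nat.mul_zero, Nat.mul_zero]
      rw [hsign, mul_assoc,
        show (((k+d).choose k : ℚ)) * (m.choose (k+d)) = (m.choose k : ℚ) * ((m-k).choose d) by
          exact_mod_cast congrArg (Nat.cast (R := ℚ)) hch]
      ring
    rw [Finset.sum_congr rfl (fun d _ => hterm d), ← Finset.mul_sum]
    have hsub : ∑ d ∈ Finset.range ((m-k)+1), (-1:ℚ)^d * ((m-k).choose d)
        = if m - k = 0 then 1 else 0 := by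
      by_cases h0 : m - k = 0
      · rw [h0]; simp
      · rw [if_neg h0]
        exact_mod_cast congrArg (fun z : ℤ => (z : ℚ))
          (Int.alternating_sum_range_choose_of_ne h0)
    have hsum : ∑ d ∈ Finset.range (M+1-k), (-1:ℚ)^d * ((m-k).choose d)
        = if m - k = 0 then 1 else 0 := by
      rw [← hsub]
      symm
      apply Finset.sum_subset
      · apply Finset.range_subset_range.mpr; omega
      · intro d _ hd
        rw [Finset.mem_range, not_lt] at hd
        rw [Nat.choose_eq_zero_of_lt (by omega : m - k < d), Nat.cast_zero, mul_zero]
    rw [hsum]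
    by_cases he : m = k
    · subst he; simp
    · rw [if_neg (by omega), if_neg he, mul_zero]

/-- The number of permutations of `{1,…,n}` whose disjoint cycle decomposition contains
exactly `k` adjacent `q`-cycles equals
`∑_{j=k}^{⌊n/q⌋} (-1)^{k+j} (j choose k) (n-(q-1)j)!/j!`. -/
theorem card_perms_with_k_adjacent_q_cycles (n q k : ℕ) (hq : 1 ≤ q) :
    ((Nat.card {π : Equiv.Perm (Fin n) // Nat.card {i : ℕ // IsAdjCycle q π i} = k}) : ℚ) =
      ∑ j ∈ Finset.Icc k (n / q),
        (-1 : ℚ) ^ (k + j) * (j.choose k) *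
          (Nat.factorial (n - (q - 1) * j)) / (Nat.factorial j) := by
  classical
  have hL : (Nat.card {π : Equiv.Perm (Fin n) // Nat.card {i : ℕ // IsAdjCycle q π i} = k})
      = (Finset.univ.filter (fun π : Equiv.Perm (Fin n) => (Aset q π).card = k)).card := by
    rw [Nat.card_congr (Equiv.subtypeEquivRight (fun π => by rw [nat_card_adj hq π]))]
    rw [Nat.card_eq_fintype_card, Fintype.card_subtype]
  rw [hL, ← Finset.sum_boole]
  have hstep2 : ∀ π : Equiv.Perm (Fin n), (if (Aset q π).card = k then (1:ℚ) else 0)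
      = ∑ j ∈ Finset.Icc k (n/q), (-1:ℚ)^(k+j) * (j.choose k) * ((Aset q π).card.choose j) :=
    fun π => (alt_sum k (n/q) _ (Aset_card_le hq π)).symm
  rw [Finset.sum_congr rfl (fun π _ => hstep2 π), Finset.sum_comm]
  apply Finset.sum_congr rfl
  intro j hj
  rw [Finset.mem_Icc] at hj
  have hq1 : (q - 1) * j + j = q * j := by
    calc (q-1)*j + j = ((q-1)+1)*j := by ring
      _ = q * j := by rw [Nat.sub_add_cancel hq]
  have hqj : q * j ≤ n := by
    have h2 := (Nat.le_div_iff_mul_le (by omega : 0 < q)).mp hj.2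
    have h3 : j * q = q * j := Nat.mul_comm j q
    omega
  rw [show (∑ π : Equiv.Perm (Fin n), (-1:ℚ)^(k+j) * (j.choose k) * ((Aset q π).card.choose j))
      = (-1:ℚ)^(k+j) * (j.choose k) *
        ∑ π : Equiv.Perm (Fin n), (((Aset q π).card.choose j : ℚ)) from by
    rw [Finset.mul_sum]]
  have key : ∑ π : Equiv.Perm (Fin n), (((Aset q π).card.choose j : ℚ))
      = ((n - (q-1)*j).choose j : ℚ) * (Nat.factorial (n - q*j)) := by
    have h1 : ∀ π : Equiv.Perm (Fin n), (((Aset q π).card.choose j : ℚ))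
        = ∑ S ∈ (Finset.range n).powersetCard j,
            (if ∀ i ∈ S, IsAdjCycle q π i then (1:ℚ) else 0) := by
      intro π
      rw [Finset.sum_boole]
      have hps : ((Finset.range n).powersetCard j).filter (fun S => ∀ i ∈ S, IsAdjCycle q π i)
          = (Aset q π).powersetCard j := by
        ext S
        simp only [Finset.mem_filter, Finset.mem_powersetCard]
        constructor
        · rintro ⟨⟨hsub, hcard⟩, hall⟩
          exact ⟨fun i hi => (mem_Aset hq).mpr (hall i hi), hcard⟩
        · rintro ⟨hsub, hcard⟩
          exact ⟨⟨fun i hi => Finset.mem_range.mpr (adjCycle_lt hq ((mem_Aset hq).mp (hsub hi))),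
            hcard⟩, fun i hi => (mem_Aset hq).mp (hsub hi)⟩
      rw [hps, Finset.card_powersetCard]
    rw [Finset.sum_congr rfl (fun π _ => h1 π), Finset.sum_comm]
    have h2 : ∀ S ∈ (Finset.range n).powersetCard j,
        (∑ π : Equiv.Perm (Fin n), if ∀ i ∈ S, IsAdjCycle q π i then (1:ℚ) else 0)
        = if adm q n S then ((Nat.factorial (n - q*j) : ℚ)) else 0 := by
      intro S hS
      rw [Finset.sum_boole]
      rw [Finset.mem_powersetCard] at hS
      by_cases hadm : adm q n S
      · rw [if_pos hadm, card_forced hq hadm, hS.2]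
      · rw [if_neg hadm, card_forced_zero hq hadm]
        simp
    rw [Finset.sum_congr rfl h2, ← Finset.sum_filter, Finset.sum_const,
      count_adm q hq n j, nsmul_eq_mul]
  rw [key]
  have hle : j ≤ n - (q-1)*j := by omega
  have hfact := Nat.choose_mul_factorial_mul_factorial hle
  have hsub2 : n - (q-1)*j - j = n - q*j := by omega
  rw [hsub2] at hfact
  have hcast : ((n - (q-1)*j).choose j : ℚ) * (Nat.factorial j) * (Nat.factorial (n - q*j))
      = (Nat.factorial (n - (q-1)*j)) := by exact_mod_cast congrArg (Nat.cast (R := ℚ)) hfact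
  have hjne : (Nat.factorial j : ℚ) ≠ 0 := Nat.cast_ne_zero.mpr (Nat.factorial_ne_zero j)
  rw [eq_div_iff hjne]
  linear_combination ((-1:ℚ)^(k+j) * (j.choose k)) * hcast
end

section
/- Under Foata's fundamental transformation mapping π to σ, the number of cycles of π equals the number of left-to-right minima of σ. -/
open Function List

namespace FoataAux

variable {n : ℕ} (π : Equiv.Perm (Fin n))

/-- The word of a single cycle, starting from `m`. -/
noncomputable def blockW (m : Fin n) : List (Fin n) :=
  (List.range (Function.minimalPeriod (⇑π) m)).map (fun k => (π ^ k) m)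

noncomputable def fw (M : List (Fin n)) : List (Fin n) := M.flatMap (blockW π)

lemma mem_pp (x : Fin n) : x ∈ periodicPts (⇑π) :=
  ⟨orderOf π, orderOf_pos π, by
    simp [Function.IsPeriodicPt, Function.IsFixedPt, Equiv.Perm.iterate_eq_pow,
      pow_orderOf_eq_one]⟩

lemma period_pos (x : Fin n) : 0 < Function.minimalPeriod (⇑π) x :=
  Function.minimalPeriod_pos_of_mem_periodicPts (mem_pp π x)

lemma pow_apply_eq_iterate (k : ℕ) (x : Fin n) : (π ^ k) x = (⇑π)^[k] x := rfl

lemma pow_period_apply (x : Fin n) : (π ^ Function.minimalPeriod (⇑π) x) x = x := by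
  rw [pow_apply_eq_iterate, Function.iterate_minimalPeriod]

lemma length_blockW (m : Fin n) : (blockW π m).length = Function.minimalPeriod (⇑π) m := by
  simp [blockW]

lemma getElem_blockW (m : Fin n) (k : ℕ) (hk : k < (blockW π m).length) :
    (blockW π m)[k] = (π ^ k) m := by
  simp [blockW]

lemma mem_blockW {m x : Fin n} :
    x ∈ blockW π m ↔ ∃ k < Function.minimalPeriod (⇑π) m, (π ^ k) m = x := by
  simp [blockW]

/-- If `m` is the minimum of its cycle and `x` is in `m`'s cycle and is the minimum of its
own cycle, then `x = m`. -/
lemma eq_head_of_min {m x : Fin n} (hm : ∀ k : ℕ, m ≤ (π ^ k) m)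
    (hx : x ∈ blockW π m) (hxm : ∀ k : ℕ, x ≤ (π ^ k) x) : x = m := by
  obtain ⟨k, hk, rfl⟩ := (mem_blockW π).1 hx
  refine le_antisymm ?_ (hm k)
  have h1 := hxm (Function.minimalPeriod (⇑π) m - k)
  have h2 : (π ^ (Function.minimalPeriod (⇑π) m - k)) ((π ^ k) m) = m := by
    rw [pow_apply_eq_iterate, pow_apply_eq_iterate, ← Function.iterate_add_apply,
      Nat.sub_add_cancel hk.le, Function.iterate_minimalPeriod]
  rwa [h2] at h1

lemma head_lt {m : Fin n} (hm : ∀ k : ℕ, m ≤ (π ^ k) m) {k : ℕ} (hk0 : 0 < k)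
    (hk : k < Function.minimalPeriod (⇑π) m) : m < (π ^ k) m := by
  refine lt_of_le_of_ne (hm k) fun h => ?_
  have := Function.iterate_injOn_Iio_minimalPeriod (f := ⇑π) (x := m)
    (Set.mem_Iio.2 (lt_of_le_of_lt (Nat.zero_le _) hk)) (Set.mem_Iio.2 hk)
    (by simp only []; rw [← pow_apply_eq_iterate, ← pow_apply_eq_iterate, pow_zero,
      Equiv.Perm.coe_one, id_eq, ← h])
  omega

/-- Key structural lemma: in the concatenation of cycle blocks with strictly decreasing
heads (each head being the minimum of its cycle), position `i` is a left-to-right minimum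
iff the letter there is one of the heads. -/
lemma key : ∀ (M : List (Fin n)), (∀ m ∈ M, ∀ k : ℕ, m ≤ (π ^ k) m) →
    M.Pairwise (· > ·) →
    ∀ i (hi : i < (fw π M).length),
      ((∀ j (hj : j < i), (fw π M)[i]'hi < (fw π M)[j]'(hj.trans hi)) ↔ (fw π M)[i]'hi ∈ M)
  | [], _, _, i, hi => by simp [fw] at hi
  | m :: M', hS, hsort, i, hi => by
    have hm : ∀ k : ℕ, m ≤ (π ^ k) m := hS m (mem_cons_self (a := m) (l := M'))
    have hS' : ∀ m' ∈ M', ∀ k : ℕ, m' ≤ (π ^ k) m' := fun m' h => hS m' (mem_cons_of_mem _ h)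
    obtain ⟨hlt, hsort'⟩ := pairwise_cons.1 hsort
    have hw : fw π (m :: M') = blockW π m ++ fw π M' := by simp [fw]
    set p := (blockW π m).length with hp
    rcases lt_or_ge i p with hip | hip
    · -- inside the first block
      have hip' : i < Function.minimalPeriod (⇑π) m := by
        rw [← length_blockW π m]; exact hip
      have hgi : (fw π (m :: M'))[i]'hi = (π ^ i) m := by
        rw [List.getElem_of_eq hw, List.getElem_append_left hip, getElem_blockW]
      rcases Nat.eq_zero_or_pos i with rfl | hi0
      · simp only [hgi, pow_zero, Equiv.Perm.coe_one, id_eq]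
        simp [mem_cons_self]
      · -- both sides false
        have hne : (π ^ i) m ∉ m :: M' := by
          intro hmem
          rcases mem_cons.1 hmem with h | h
          · exact absurd h.symm (ne_of_lt (head_lt π hm hi0 hip'))
          · have := eq_head_of_min π hm ((mem_blockW π).2
              ⟨i, hip', rfl⟩) (hS' _ h)
            exact absurd this.symm (ne_of_lt (head_lt π hm hi0 hip'))
        have hnl : ¬ (∀ j (hj : j < i), (fw π (m :: M'))[i]'hi <
            (fw π (m :: M'))[j]'(hj.trans hi)) := by
          intro hL
          have h0 := hL 0 hi0
          have hg0 : (fw π (m :: M'))[0]'(hi0.trans hi) = m := by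
            rw [List.getElem_of_eq hw, List.getElem_append_left (hi0.trans hip),
              getElem_blockW]
            simp
          rw [hgi, hg0] at h0
          exact absurd h0 (not_lt.2 (hm i))
        exact iff_of_false hnl (fun hmem => hne (hgi ▸ hmem))
    · -- in the tail
      have hlen : (fw π (m :: M')).length = p + (fw π M').length := by
        rw [hw, length_append]
      have hi' : i - p < (fw π M').length := by omega
      have hgi : (fw π (m :: M'))[i]'hi = (fw π M')[i - p]'hi' := by
        rw [List.getElem_of_eq hw, List.getElem_append_right hip]
      set x := (fw π M')[i - p]'hi' with hx
      have IH := key M' hS' hsort' (i - p) hi'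
      have hgj : ∀ j (hj : j < i - p), (fw π (m :: M'))[j + p]'(by omega) =
          (fw π M')[j]'(by omega) := by
        intro j hj
        rw [List.getElem_of_eq hw, List.getElem_append_right (by omega)]
        congr 1
        omega
      constructor
      · intro hL
        have hL' : ∀ j (hj : j < i - p), x < (fw π M')[j]'(by omega) := by
          intro j hj
          have := hL (j + p) (by omega)
          rwa [hgi, hgj j hj] at this
        rw [hgi]
        exact mem_cons_of_mem _ (IH.1 hL')
      · intro hmem
        have hxM' : x ∈ M' := by
          rcases mem_cons.1 (hgi ▸ hmem) with h | h
          · exfalso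
            have hxw : x ∈ fw π M' := hx ▸ List.getElem_mem hi'
            obtain ⟨m', hm', hxb⟩ := List.mem_flatMap.1 hxw
            have := eq_head_of_min π (hS' m' hm') (h ▸ hxb) (h ▸ hm)
            exact absurd (this ▸ hlt m' hm') (lt_irrefl m')
          · exact h
        have hL' := IH.2 hxM'
        intro j hj
        rcases lt_or_ge j p with hjp | hjp
        · have hgj' : (fw π (m :: M'))[j]'(hj.trans hi) = (π ^ j) m := by
            rw [List.getElem_of_eq hw, List.getElem_append_left hjp, getElem_blockW]
          rw [hgi, hgj']
          exact lt_of_lt_of_le (hlt x hxM') (hm j)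
        · have hj' : j - p < i - p := by omega
          have := hL' (j - p) hj'
          have hgj'' : (fw π (m :: M'))[j]'(hj.trans hi) = (fw π M')[j - p]'(by omega) := by
            rw [List.getElem_of_eq hw, List.getElem_append_right hjp]
          rw [hgi, hgj'']
          exact this


open Classical in
/-- The list of cycle minima, in decreasing order. -/
noncomputable def M0 : List (Fin n) :=
  ((List.finRange n).filter (fun m => decide (∀ k : ℕ, m ≤ (π ^ k) m))).reverse

lemma mem_M0 {m : Fin n} : m ∈ M0 π ↔ ∀ k : ℕ, m ≤ (π ^ k) m := by
  simp [M0, List.mem_filter]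

lemma hS0 : ∀ m ∈ M0 π, ∀ k : ℕ, m ≤ (π ^ k) m := fun m h => (mem_M0 π).1 h

lemma hsort0 : (M0 π).Pairwise (· > ·) := by
  rw [M0, List.pairwise_reverse]
  exact (List.pairwise_lt_finRange n).filter _

lemma sameCycle_of_mem_blockW {m x : Fin n} (h : x ∈ blockW π m) : π.SameCycle m x := by
  obtain ⟨k, _, rfl⟩ := (mem_blockW π).1 h
  exact ⟨(k : ℤ), by rw [zpow_natCast]⟩

lemma mem_fw_M0 (x : Fin n) : x ∈ fw π (M0 π) := by
  classical
  set T : Finset (Fin n) := Finset.univ.filter (fun y => π.SameCycle x y) with hT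
  have hxT : x ∈ T := by simp [hT, Equiv.Perm.SameCycle.refl]
  have hne : T.Nonempty := ⟨x, hxT⟩
  set m := T.min' hne with hmdef
  have hmT : m ∈ T := T.min'_mem hne
  have hsc : π.SameCycle x m := by simpa [hT] using hmT
  have hmS : ∀ k : ℕ, m ≤ (π ^ k) m := by
    intro k
    refine T.min'_le _ ?_
    simp only [hT, Finset.mem_filter, Finset.mem_univ, true_and]
    exact hsc.trans ⟨(k : ℤ), by rw [zpow_natCast]⟩
  have hmM : m ∈ M0 π := (mem_M0 π).2 hmS
  obtain ⟨k, hk⟩ := (hsc.symm).exists_pow_eq'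
  refine List.mem_flatMap.2 ⟨m, hmM, (mem_blockW π).2
    ⟨k % Function.minimalPeriod (⇑π) m, Nat.mod_lt _ (period_pos π m), ?_⟩⟩
  rw [pow_apply_eq_iterate, Function.iterate_mod_minimalPeriod_eq,
    ← pow_apply_eq_iterate, hk.2]

lemma nodup_blockW (m : Fin n) : (blockW π m).Nodup := by
  refine List.Nodup.map_on ?_ List.nodup_range
  intro a ha b hb hab
  exact Function.iterate_injOn_Iio_minimalPeriod (f := ⇑π) (x := m)
    (Set.mem_Iio.2 (List.mem_range.1 ha)) (Set.mem_Iio.2 (List.mem_range.1 hb)) hab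

lemma nodup_fw_M0 : (fw π (M0 π)).Nodup := by
  rw [fw, List.nodup_flatMap]
  refine ⟨fun m _ => nodup_blockW π m, ?_⟩
  refine List.Pairwise.imp_of_mem ?_ (hsort0 π)
  intro m₁ m₂ h1 h2 hgt x hx1 hx2
  have hc : π.SameCycle m₁ m₂ :=
    (sameCycle_of_mem_blockW π hx1).trans (sameCycle_of_mem_blockW π hx2).symm
  obtain ⟨j, hj⟩ := hc.exists_pow_eq'
  obtain ⟨j', hj'⟩ := hc.symm.exists_pow_eq'
  have h12 : m₁ ≤ m₂ := hj.2 ▸ hS0 π m₁ h1 j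
  have h21 : m₂ ≤ m₁ := hj'.2 ▸ hS0 π m₂ h2 j'
  exact absurd (le_antisymm h12 h21) (ne_of_gt hgt)

lemma length_fw_M0 : (fw π (M0 π)).length = n := by
  refine le_antisymm ?_ ?_
  · simpa using (nodup_fw_M0 π).length_le_card
  · have h := (List.subperm_of_subset (List.nodup_finRange n)
      (fun x _ => mem_fw_M0 π x)).length_le
    simpa using h

lemma exists_perm_ofFn : ∃ σ : Equiv.Perm (Fin n), List.ofFn ⇑σ = fw π (M0 π) := by
  have hlen := length_fw_M0 π
  set f : Fin n → Fin n := fun i => (fw π (M0 π))[(i : ℕ)]'(by omega) with hf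
  have hinj : Function.Injective f := by
    intro a b hab
    have := (List.nodup_iff_injective_getElem.1 (nodup_fw_M0 π))
      (a₁ := ⟨a, by omega⟩) (a₂ := ⟨b, by omega⟩) hab
    simpa [Fin.ext_iff] using this
  have hbij : Function.Bijective f := Finite.injective_iff_bijective.1 hinj
  refine ⟨Equiv.ofBijective f hbij, ?_⟩
  refine List.ext_getElem (by simp [hlen]) ?_
  intro i h1 h2
  simp [Equiv.ofBijective, hf]

end FoataAux

open Classical in
/-- The one-line word of Foata's fundamental transformation: write each cycle of `π`
with its smallest element first, sort the cycles in descending order of their first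
elements, and erase the parentheses. -/
noncomputable def foataWord {n : ℕ} (π : Equiv.Perm (Fin n)) : List (Fin n) :=
  (((List.finRange n).filter (fun m => decide (∀ k : ℕ, m ≤ (π ^ k) m))).reverse).flatMap
    (fun m => (List.range (Function.minimalPeriod (⇑π) m)).map (fun k => (π ^ k) m))

/-- Foata's fundamental transformation as a map on permutations. -/
noncomputable def foataPerm {n : ℕ} (π : Equiv.Perm (Fin n)) : Equiv.Perm (Fin n) :=
  if h : ∃ σ : Equiv.Perm (Fin n), List.ofFn ⇑σ = foataWord π then h.choose else 1

/-- Under Foata's fundamental transformation `π ↦ σ`, the number of cycles of `π`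
(counted via their minimal elements) equals the number of left-to-right minima of `σ`. -/
theorem foata_cycles_eq_ltr_minima {n : ℕ} (π σ : Equiv.Perm (Fin n))
    (h : σ = foataPerm π) :
    Nat.card {m : Fin n // ∀ k : ℕ, m ≤ (π ^ k) m} =
      Nat.card {i : Fin n // ∀ j, j < i → σ i < σ j} := by
  subst h
  have hfw : foataWord π = FoataAux.fw π (FoataAux.M0 π) := rfl
  have hex : ∃ σ : Equiv.Perm (Fin n), List.ofFn ⇑σ = foataWord π := by
    rw [hfw]; exact FoataAux.exists_perm_ofFn π
  set σ := foataPerm π with hσdef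
  have hτ : List.ofFn ⇑σ = FoataAux.fw π (FoataAux.M0 π) := by
    rw [hσdef, foataPerm, dif_pos hex, ← hfw]
    exact hex.choose_spec
  have hlen := FoataAux.length_fw_M0 π
  have hσ : ∀ i : Fin n, σ i = (FoataAux.fw π (FoataAux.M0 π))[(i : ℕ)]'(by omega) := by
    intro i
    rw [← List.getElem_of_eq hτ (by simp)]
    simp
  have hiff : ∀ i : Fin n, (∀ j, j < i → σ i < σ j) ↔ (∀ k : ℕ, σ i ≤ (π ^ k) (σ i)) := by
    intro i
    have hi : (i : ℕ) < (FoataAux.fw π (FoataAux.M0 π)).length := by omega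
    have hkey := FoataAux.key π (FoataAux.M0 π) (FoataAux.hS0 π) (FoataAux.hsort0 π) i hi
    have hq : (∀ j, j < i → σ i < σ j) ↔
        (∀ j (hj : j < (i : ℕ)), (FoataAux.fw π (FoataAux.M0 π))[(i : ℕ)]'hi <
          (FoataAux.fw π (FoataAux.M0 π))[j]'(hj.trans hi)) := by
      constructor
      · intro hL j hj
        have := hL ⟨j, by omega⟩ (by exact hj)
        rwa [hσ i, hσ ⟨j, by omega⟩] at this
      · intro hL j hj
        rw [hσ i, hσ j]
        exact hL (j : ℕ) hj
    rw [hq, hkey, FoataAux.mem_M0, ← hσ i]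
  calc Nat.card {m : Fin n // ∀ k : ℕ, m ≤ (π ^ k) m}
      = Nat.card {i : Fin n // ∀ j, j < i → σ i < σ j} := by
        refine (Nat.card_congr ?_).symm
        exact (Equiv.subtypeEquivRight hiff).trans
          (Equiv.subtypeEquiv σ (fun i => Iff.rfl))
end

section
/- Under Foata's fundamental transformation mapping π to σ, the number of fixed points of π equals the number of occurrences in σ of the pattern r_1 plus the number of occurrences of the pattern s_1, where an occurrence of r_1 is a position i that is a left-to-right minimum, is the last position (i = n), and σ(i) = 1 (i.e., σ(n)=1 is the minimum value at the last position); and an occurrence of s_1 is a pair of adjacent positions i, i+1 that are both left-to-right minima of σ. -/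
namespace FoataProof
open Equiv Function

variable {n : ℕ} (π : Equiv.Perm (Fin n))

def P (π : Equiv.Perm (Fin n)) (m : Fin n) : Prop := ∀ k : ℕ, m ≤ (π ^ k) m

noncomputable def cmin (x : Fin n) : Fin n :=
  (Finset.univ.filter (π.SameCycle x)).min'
    ⟨x, by simp [Equiv.Perm.SameCycle.refl]⟩

lemma mem_cminSet {x y : Fin n} :
    y ∈ Finset.univ.filter (π.SameCycle x) ↔ π.SameCycle x y := by simp

lemma sameCycle_cmin (x : Fin n) : π.SameCycle x (cmin π x) :=
  (mem_cminSet π).1 (Finset.min'_mem _ _)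

lemma cmin_le {x y : Fin n} (h : π.SameCycle x y) : cmin π x ≤ y :=
  Finset.min'_le _ _ ((mem_cminSet π).2 h)

lemma cmin_le_self (x : Fin n) : cmin π x ≤ x := cmin_le π (Equiv.Perm.SameCycle.refl _ _)

lemma sameCycle_pow (x : Fin n) (k : ℕ) : π.SameCycle x ((π ^ k) x) :=
  ⟨k, by simp⟩

lemma P_cmin (x : Fin n) : P π (cmin π x) := by
  intro k
  exact cmin_le π ((sameCycle_cmin π x).trans (sameCycle_pow π _ k))

lemma cmin_eq_self_of_P {x : Fin n} (h : P π x) : cmin π x = x := by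
  refine le_antisymm (cmin_le_self π x) (Finset.le_min' _ _ _ ?_)
  intro y hy
  obtain ⟨k, _, rfl⟩ := ((mem_cminSet π).1 hy).exists_pow_eq'
  exact h k

lemma P_iff_cmin {x : Fin n} : P π x ↔ cmin π x = x :=
  ⟨cmin_eq_self_of_P π, fun h => h ▸ P_cmin π x⟩

lemma cmin_eq_of_sameCycle {x y : Fin n} (h : π.SameCycle x y) : cmin π x = cmin π y := by
  unfold cmin
  congr 1
  ext z
  simp only [Finset.mem_filter, Finset.mem_univ, true_and]
  exact ⟨h.symm.trans, h.trans⟩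

lemma cmin_pow (x : Fin n) (k : ℕ) : cmin π ((π ^ k) x) = cmin π x :=
  (cmin_eq_of_sameCycle π (sameCycle_pow π x k)).symm

lemma eq_of_cmin_eq_of_fixed {x y : Fin n} (hy : π y = y) (h : cmin π x = y) : x = y := by
  obtain ⟨k, _, hk⟩ := (sameCycle_cmin π x).exists_pow_eq'
  -- (π ^ k) x = cmin x = y, and y fixed so (π^k)⁻¹ y = y
  have hfix : (π ^ k) y = y := Function.IsFixedPt.perm_pow hy k
  exact (π ^ k).injective (by rw [hk, h, hfix])
noncomputable def blk (π : Equiv.Perm (Fin n)) (m : Fin n) : List (Fin n) :=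
  (List.range (Function.minimalPeriod (⇑π) m)).map (fun k => (π ^ k) m)

lemma minPeriod_pos (x : Fin n) : 0 < Function.minimalPeriod (⇑π) x := by
  have h : Function.IsPeriodicPt (⇑π) (orderOf π) x := by
    simp [Function.IsPeriodicPt, Function.IsFixedPt, Equiv.Perm.iterate_eq_pow,
      pow_orderOf_eq_one]
  exact h.minimalPeriod_pos (orderOf_pos π)

lemma length_blk (m : Fin n) : (blk π m).length = Function.minimalPeriod (⇑π) m := by
  simp [blk]

lemma blk_ne_nil (m : Fin n) : blk π m ≠ [] := by
  rw [← List.length_pos_iff_ne_nil, length_blk]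
  exact minPeriod_pos π m

lemma getElem_blk (m : Fin n) (k : ℕ) (h : k < (blk π m).length) :
    (blk π m)[k] = (π ^ k) m := by
  simp [blk]

lemma nodup_blk (m : Fin n) : (blk π m).Nodup := by
  refine List.Nodup.map_on ?_ List.nodup_range
  intro a ha b hb hab
  simp only [List.mem_range] at ha hb
  have := Function.iterate_injOn_Iio_minimalPeriod (f := ⇑π) (x := m)
  exact this ha hb (by simpa [Equiv.Perm.iterate_eq_pow] using hab)

lemma mem_blk_iff {m x : Fin n} : x ∈ blk π m ↔ π.SameCycle m x := by
  constructor
  · rintro hx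
    simp only [blk, List.mem_map, List.mem_range] at hx
    obtain ⟨k, _, rfl⟩ := hx
    exact ⟨k, by simp⟩
  · intro h
    obtain ⟨k, _, rfl⟩ := h.exists_pow_eq'
    simp only [blk, List.mem_map, List.mem_range]
    refine ⟨k % Function.minimalPeriod (⇑π) m, Nat.mod_lt _ (minPeriod_pos π m), ?_⟩
    rw [← Equiv.Perm.iterate_eq_pow, ← Equiv.Perm.iterate_eq_pow,
      Function.iterate_mod_minimalPeriod_eq]

noncomputable def W (π : Equiv.Perm (Fin n)) (ms : List (Fin n)) : List (Fin n) :=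
  ms.flatMap (blk π)

lemma cmin_mem_blk {m x : Fin n} (hm : P π m) (hx : x ∈ blk π m) : cmin π x = m := by
  simp only [blk, List.mem_map, List.mem_range] at hx
  obtain ⟨k, _, rfl⟩ := hx
  rw [cmin_pow, cmin_eq_self_of_P π hm]

variable {ms : List (Fin n)}

lemma pairwise_cmin (hP : ∀ m ∈ ms, P π m) (hs : ms.Pairwise (· > ·)) :
    (W π ms).Pairwise (fun x y => cmin π y ≤ cmin π x) := by
  rw [W, List.pairwise_flatMap]
  constructor
  · intro m hm
    refine List.pairwise_of_forall_mem_list ?_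
    intro x hx y hy
    rw [cmin_mem_blk π (hP m hm) hx, cmin_mem_blk π (hP m hm) hy]
  · refine hs.imp_of_mem ?_
    intro a b ha hb hab x hx y hy
    rw [cmin_mem_blk π (hP a ha) hx, cmin_mem_blk π (hP b hb) hy]
    exact le_of_lt hab

lemma nodup_W (hP : ∀ m ∈ ms, P π m) (hs : ms.Pairwise (· > ·)) : (W π ms).Nodup := by
  rw [W, List.Nodup, List.pairwise_flatMap]
  refine ⟨fun m _ => nodup_blk π m, ?_⟩
  refine hs.imp_of_mem ?_
  intro a b ha hb hab x hx y hy hxy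
  have h1 : cmin π x = a := cmin_mem_blk π (hP a ha) hx
  have h2 : cmin π y = b := cmin_mem_blk π (hP b hb) hy
  exact absurd (h1 ▸ h2 ▸ hxy ▸ rfl : a = b) (ne_of_gt hab)

lemma mem_W (hall : ∀ m, P π m → m ∈ ms) (x : Fin n) : x ∈ W π ms := by
  rw [W, List.mem_flatMap]
  exact ⟨cmin π x, hall _ (P_cmin π x), (mem_blk_iff π).2 (sameCycle_cmin π x).symm⟩

lemma W_cons (m : Fin n) : W π (m :: ms) = blk π m ++ W π ms := by
  simp [W]

lemma lemG0 (hP : ∀ m ∈ ms, P π m) (h : 0 < (W π ms).length) : P π ((W π ms)[0]) := by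
  cases ms with
  | nil => simp [W] at h
  | cons m ms =>
    have hb : 0 < (blk π m).length := by rw [length_blk]; exact minPeriod_pos π m
    have : (W π (m :: ms))[0]'h = (blk π m)[0] := by
      simp only [W_cons] at h ⊢
      exact List.getElem_append_left hb
    rw [this, getElem_blk]
    · exact hP m List.mem_cons_self

lemma pow_apply_pred_period (m : Fin n) :
    π ((π ^ (Function.minimalPeriod (⇑π) m - 1)) m) = m := by
  have hc := minPeriod_pos π m
  have : π * π ^ (Function.minimalPeriod (⇑π) m - 1) = π ^ Function.minimalPeriod (⇑π) m := by
    rw [← pow_succ']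
    congr 1
    omega
  have h2 : (π ^ Function.minimalPeriod (⇑π) m) m = m := by
    rw [← Equiv.Perm.iterate_eq_pow]
    exact Function.iterate_minimalPeriod
  calc π ((π ^ (Function.minimalPeriod (⇑π) m - 1)) m)
      = (π * π ^ (Function.minimalPeriod (⇑π) m - 1)) m := rfl
    _ = m := by rw [this, h2]

lemma lemG (hP : ∀ m ∈ ms, P π m) :
    ∀ i (h : i + 1 < (W π ms).length),
      ((W π ms)[i+1] = π ((W π ms)[i]'(by omega)) ∧ ¬ P π ((W π ms)[i+1])) ∨
      (P π ((W π ms)[i+1]) ∧ π ((W π ms)[i]'(by omega)) = cmin π ((W π ms)[i]'(by omega))) := by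
  induction ms with
  | nil => intro i h; simp [W] at h
  | cons m ms ih =>
    intro i h
    set c := Function.minimalPeriod (⇑π) m with hc
    have hbl : (blk π m).length = c := length_blk π m
    have hcpos : 0 < c := minPeriod_pos π m
    have hPm : P π m := hP m List.mem_cons_self
    have hP' : ∀ m' ∈ ms, P π m' := fun m' hm' => hP m' (List.mem_cons_of_mem _ hm')
    simp only [W_cons] at h ⊢
    rcases lt_trichotomy (i+1) c with h1 | h1 | h1
    · -- both inside blk
      have hi : i < (blk π m).length := by omega
      have hi1 : i + 1 < (blk π m).length := by omega
      rw [List.getElem_append_left hi1, List.getElem_append_left hi,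
        getElem_blk, getElem_blk]
      left
      constructor
      · rw [show (π ^ (i+1)) m = (π * π ^ i) m by rw [pow_succ'], Equiv.Perm.mul_apply]
      · intro hPP
        have := cmin_eq_self_of_P π hPP
        rw [cmin_pow, cmin_eq_self_of_P π hPm] at this
        -- (π^(i+1)) m = m, contradiction with injOn
        have h0 : (π ^ (i+1)) m = (π ^ 0) m := by simp [← this]
        have hinj := Function.iterate_injOn_Iio_minimalPeriod (f := ⇑π) (x := m)
        have : i + 1 = 0 := by
          refine hinj ?_ ?_ ?_
          · exact Set.mem_Iio.2 (by omega)
          · exact Set.mem_Iio.2 (by omega)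
          · simpa only [Equiv.Perm.iterate_eq_pow] using h0
        omega
    · -- boundary : i + 1 = c
      have hi : i < (blk π m).length := by omega
      have hlen' : 0 < (W π ms).length := by
        rw [List.length_append] at h; omega
      have e1 : (blk π m ++ W π ms)[i+1]'h = (W π ms)[0] := by
        rw [List.getElem_append_right (by omega)]
        congr 1
        omega
      have e2 : (blk π m ++ W π ms)[i]'(by omega) = (π ^ i) m := by
        rw [List.getElem_append_left hi, getElem_blk]
      right
      rw [e1, e2]
      refine ⟨lemG0 π hP' hlen', ?_⟩
      have : i = c - 1 := by omega
      subst this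
      rw [pow_apply_pred_period, cmin_pow, cmin_eq_self_of_P π hPm]
    · -- both in tail
      have hge : (blk π m).length ≤ i := by omega
      have hge1 : (blk π m).length ≤ i + 1 := by omega
      have hlt : (i + 1) - (blk π m).length < (W π ms).length := by
        rw [List.length_append] at h; omega
      have e1 : (blk π m ++ W π ms)[i+1]'h = (W π ms)[(i - c) + 1]'(by omega) := by
        rw [List.getElem_append_right hge1]
        congr 1
        omega
      have e2 : (blk π m ++ W π ms)[i]'(by omega) = (W π ms)[i - c]'(by omega) := by
        rw [List.getElem_append_right hge]
        congr 1
        omega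
      rw [e1, e2]
      exact ih hP' (i - c) (by omega)

lemma lemH (hP : ∀ m ∈ ms, P π m) (h : 0 < (W π ms).length) :
    π ((W π ms)[(W π ms).length - 1]'(by omega)) =
      cmin π ((W π ms)[(W π ms).length - 1]'(by omega)) := by
  induction ms with
  | nil => simp [W] at h
  | cons m ms ih =>
    set c := Function.minimalPeriod (⇑π) m with hc
    have hbl : (blk π m).length = c := length_blk π m
    have hcpos : 0 < c := minPeriod_pos π m
    have hPm : P π m := hP m List.mem_cons_self
    have hP' : ∀ m' ∈ ms, P π m' := fun m' hm' => hP m' (List.mem_cons_of_mem _ hm')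
    simp only [W_cons] at h ⊢
    rcases Nat.eq_zero_or_pos (W π ms).length with h0 | h0
    · have hidx : (blk π m ++ W π ms).length - 1 < (blk π m).length := by
        rw [List.length_append]; omega
      have e : (blk π m ++ W π ms)[(blk π m ++ W π ms).length - 1]'(by
          rw [List.length_append]; omega) =
          (π ^ (Function.minimalPeriod (⇑π) m - 1)) m := by
        have hlen : (blk π m ++ W π ms).length - 1 = Function.minimalPeriod (⇑π) m - 1 := by
          rw [List.length_append, hbl]; omega
        rw [List.getElem_append_left hidx, getElem_blk, hlen]
      rw [e, pow_apply_pred_period π m, cmin_pow, cmin_eq_self_of_P π hPm]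
    · have hge : (blk π m).length ≤ (blk π m ++ W π ms).length - 1 := by
        rw [List.length_append]; omega
      have e : (blk π m ++ W π ms)[(blk π m ++ W π ms).length - 1]'(by
          rw [List.length_append]; omega) =
          (W π ms)[(W π ms).length - 1]'(by omega) := by
        have hlen2 : (blk π m ++ W π ms).length - 1 - (blk π m).length =
            (W π ms).length - 1 := by
          rw [List.length_append]; omega
        rw [List.getElem_append_right hge]
        simp only [hlen2]
      rw [e]
      exact ih hP' h0

open Classical in
noncomputable def ms0 (π : Equiv.Perm (Fin n)) : List (Fin n) :=
  ((List.finRange n).filter (fun m => decide (∀ k : ℕ, m ≤ (π ^ k) m))).reverse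

lemma foataWord_eq : foataWord π = W π (ms0 π) := rfl

lemma mem_ms0 {m : Fin n} : m ∈ ms0 π ↔ P π m := by
  simp only [ms0, List.mem_reverse, List.mem_filter, List.mem_finRange, true_and,
    decide_eq_true_eq]
  rfl

lemma sorted_ms0 : (ms0 π).Pairwise (· > ·) := by
  rw [ms0, List.pairwise_reverse]
  exact List.Pairwise.filter _ (List.pairwise_lt_finRange n)

lemma nodup_foataWord : (foataWord π).Nodup := by
  rw [foataWord_eq]
  exact nodup_W π (fun m hm => (mem_ms0 π).1 hm) (sorted_ms0 π)

lemma mem_foataWord (x : Fin n) : x ∈ foataWord π := by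
  rw [foataWord_eq]
  exact mem_W π (fun m hm => (mem_ms0 π).2 hm) x

lemma length_foataWord : (foataWord π).length = n := by
  have h1 : (foataWord π).toFinset = Finset.univ :=
    Finset.eq_univ_iff_forall.2 (fun x => List.mem_toFinset.2 (mem_foataWord π x))
  have h2 := List.toFinset_card_of_nodup (nodup_foataWord π)
  rw [h1] at h2
  simp at h2
  omega

lemma exists_perm_foata : ∃ σ : Equiv.Perm (Fin n), List.ofFn ⇑σ = foataWord π := by
  have hlen := length_foataWord π
  let g : Fin n → Fin n := fun i => (foataWord π)[(i : ℕ)]'(by rw [hlen]; exact i.isLt)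
  have hg : Function.Injective g := by
    intro a b hab
    have hinj := List.nodup_iff_injective_getElem.mp (nodup_foataWord π)
    have := hinj (a₁ := ⟨a, by rw [hlen]; exact a.isLt⟩) (a₂ := ⟨b, by rw [hlen]; exact b.isLt⟩)
      hab
    simpa [Fin.ext_iff] using this
  refine ⟨Equiv.ofBijective g ((Finite.injective_iff_bijective).1 hg), ?_⟩
  apply List.ext_getElem
  · simp [hlen]
  · intro i h1 h2
    simp only [List.getElem_ofFn, Equiv.ofBijective_apply]
    rfl

lemma ofFn_foataPerm : List.ofFn ⇑(foataPerm π) = foataWord π := by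
  rw [foataPerm, dif_pos (exists_perm_foata π)]
  exact (exists_perm_foata π).choose_spec

lemma foataPerm_apply (i : Fin n) :
    foataPerm π i = (foataWord π)[(i : ℕ)]'(by rw [length_foataWord]; exact i.isLt) := by
  have h2 : (List.ofFn ⇑(foataPerm π))[(i : ℕ)]'(by simp) =
      (foataWord π)[(i : ℕ)]'(by rw [length_foataWord]; exact i.isLt) := by
    simp only [ofFn_foataPerm π]
  rw [← h2]
  simp

lemma sorted_cmin_sigma {i j : Fin n} (hij : i < j) :
    cmin π (foataPerm π j) ≤ cmin π (foataPerm π i) := by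
  have hp := pairwise_cmin π (fun m hm => (mem_ms0 π).1 hm) (sorted_ms0 π)
  rw [← foataWord_eq π, List.pairwise_iff_getElem] at hp
  have h := hp (i : ℕ) (j : ℕ) (by rw [length_foataWord]; exact i.isLt)
    (by rw [length_foataWord]; exact j.isLt) hij
  rw [foataPerm_apply, foataPerm_apply]
  exact h

lemma hP_ms0 : ∀ m ∈ ms0 π, P π m := fun m hm => (mem_ms0 π).1 hm

lemma lemG0_sigma (hn : 0 < n) : P π (foataPerm π ⟨0, hn⟩) := by
  have h := lemG0 π (hP_ms0 π) (ms := ms0 π)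
    (by rw [← foataWord_eq π, length_foataWord]; omega)
  simp only [← foataWord_eq π] at h
  rw [foataPerm_apply]
  exact h

lemma lemG_sigma (i : Fin n) (h : (i : ℕ) + 1 < n) :
    (foataPerm π ⟨(i : ℕ) + 1, h⟩ = π (foataPerm π i) ∧
      ¬ P π (foataPerm π ⟨(i : ℕ) + 1, h⟩)) ∨
    (P π (foataPerm π ⟨(i : ℕ) + 1, h⟩) ∧
      π (foataPerm π i) = cmin π (foataPerm π i)) := by
  have hG := lemG π (hP_ms0 π) (i : ℕ)
    (by rw [← foataWord_eq π, length_foataWord]; omega)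
  simp only [← foataWord_eq π] at hG
  rw [foataPerm_apply, foataPerm_apply]
  exact hG

lemma lemH_sigma (hn : 0 < n) :
    π (foataPerm π ⟨n - 1, by omega⟩) = cmin π (foataPerm π ⟨n - 1, by omega⟩) := by
  have hH := lemH π (hP_ms0 π) (ms := ms0 π)
    (by rw [← foataWord_eq π, length_foataWord]; omega)
  simp only [← foataWord_eq π] at hH
  rw [foataPerm_apply]
  have hl : (foataWord π).length - 1 = n - 1 := by rw [length_foataWord]
  simp only [hl] at hH
  exact hH

lemma claimK : ∀ (k : ℕ) (i : Fin n), (i : ℕ) = k → ¬ P π (foataPerm π i) →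
    ∃ j, j < i ∧ foataPerm π j = cmin π (foataPerm π i) := by
  intro k
  induction k using Nat.strong_induction_on with
  | _ k ih =>
    intro i hik hnP
    have hn : 0 < n := i.pos
    rcases Nat.eq_zero_or_pos k with h0 | h0
    · exfalso
      have hi0 : i = ⟨0, hn⟩ := Fin.ext (by show (i : ℕ) = 0; omega)
      exact hnP (hi0 ▸ lemG0_sigma π hn)
    · set i' : Fin n := ⟨(i : ℕ) - 1, by omega⟩ with hi'
      have hb : (i' : ℕ) + 1 < n := by
        have := i.isLt; simp only [hi']; omega
      have hieq : (⟨(i' : ℕ) + 1, hb⟩ : Fin n) = i := Fin.ext (by simp [hi']; omega)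
      rcases lemG_sigma π i' hb with ⟨heq, _⟩ | ⟨hPP, _⟩
      · rw [hieq] at heq
        have hcm : cmin π (foataPerm π i) = cmin π (foataPerm π i') := by
          rw [heq, show π (foataPerm π i') = (π ^ 1) (foataPerm π i') by simp, cmin_pow]
        by_cases hP' : P π (foataPerm π i')
        · exact ⟨i', by rw [Fin.lt_def]; simp [hi']; omega,
            by rw [hcm, cmin_eq_self_of_P π hP']⟩
        · obtain ⟨j, hj1, hj2⟩ := ih ((i : ℕ) - 1) (by omega) i' rfl hP'
          exact ⟨j, lt_trans hj1 (by rw [Fin.lt_def]; simp [hi']; omega), by rw [hcm]; exact hj2⟩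
      · rw [hieq] at hPP
        exact absurd hPP hnP

lemma LTR_iff (i : Fin n) :
    (∀ j, j < i → foataPerm π i < foataPerm π j) ↔ P π (foataPerm π i) := by
  constructor
  · intro hl
    by_contra hnP
    obtain ⟨j, hj, hje⟩ := claimK π _ i rfl hnP
    have h1 : foataPerm π j ≤ foataPerm π i := hje ▸ cmin_le_self π _
    exact absurd (hl j hj) (not_lt.2 h1)
  · intro hp j hj
    have h1 : cmin π (foataPerm π i) ≤ cmin π (foataPerm π j) := sorted_cmin_sigma π hj
    have h2 : foataPerm π i ≤ foataPerm π j :=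
      le_trans (le_of_eq (cmin_eq_self_of_P π hp).symm) (h1.trans (cmin_le_self π _))
    refine lt_of_le_of_ne h2 (fun he => ?_)
    exact absurd ((foataPerm π).injective he) (ne_of_gt hj)

lemma P_of_fixed {x : Fin n} (hx : π x = x) : P π x :=
  fun k => le_of_eq (Function.IsFixedPt.perm_pow hx k).symm

lemma cmin_zero (hn : 0 < n) : cmin π ⟨0, hn⟩ = ⟨0, hn⟩ :=
  le_antisymm (cmin_le_self π _) (by simp [Fin.le_def])

lemma cmin_last (hn : 0 < n) :
    cmin π (foataPerm π ⟨n - 1, by omega⟩) = ⟨0, hn⟩ := by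
  set j0 := (foataPerm π).symm ⟨0, hn⟩ with hj0
  refine le_antisymm ?_ (by simp [Fin.le_def])
  rcases eq_or_lt_of_le (show j0 ≤ ⟨n - 1, by omega⟩ from by
      have := j0.isLt; simp only [Fin.le_def]; simp; omega) with he | hlt
  · rw [← he, hj0, Equiv.apply_symm_apply, cmin_zero π hn]
  · have h1 := sorted_cmin_sigma π hlt
    rw [hj0, Equiv.apply_symm_apply, cmin_zero π hn] at h1
    exact h1

lemma fixed0_iff (hn : 0 < n) :
    π ⟨0, hn⟩ = ⟨0, hn⟩ ↔ foataPerm π ⟨n - 1, by omega⟩ = ⟨0, hn⟩ := by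
  constructor
  · intro hfix
    exact eq_of_cmin_eq_of_fixed π hfix (cmin_last π hn)
  · intro hl
    have := lemH_sigma π hn
    rw [hl, cmin_zero π hn] at this
    exact this

lemma fixed_of_adjLTR {i i' : Fin n} (hi' : (i' : ℕ) = (i : ℕ) + 1)
    (hL : ∀ j, j < i → foataPerm π i < foataPerm π j)
    (hL' : ∀ j, j < i' → foataPerm π i' < foataPerm π j) :
    π (foataPerm π i) = foataPerm π i := by
  have hb : (i : ℕ) + 1 < n := by rw [← hi']; exact i'.isLt
  have hii' : i' = ⟨(i : ℕ) + 1, hb⟩ := Fin.ext hi'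
  rcases lemG_sigma π i hb with ⟨_, hnP⟩ | ⟨_, heq⟩
  · exact absurd ((LTR_iff π i').1 hL') (hii' ▸ hnP)
  · rw [heq, cmin_eq_self_of_P π ((LTR_iff π i).1 hL)]

end FoataProof

open FoataProof in
/-- Under Foata's fundamental transformation `π ↦ σ`, the number of fixed points of `π`
equals the number of occurrences of `r₁` in `σ` (a left-to-right minimum at the last
position carrying the smallest value) plus the number of occurrences of `s₁` in `σ`
(two adjacent positions which are both left-to-right minima). -/
theorem foata_fixed_points_eq_r1_add_s1 {n : ℕ} (π σ : Equiv.Perm (Fin n))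
    (h : σ = foataPerm π) :
    Nat.card {i : Fin n // π i = i} =
      Nat.card {i : Fin n //
        (i : ℕ) = n - 1 ∧ (σ i : ℕ) = 0 ∧ ∀ j, j < i → σ i < σ j} +
      Nat.card {i : Fin n // ∃ i' : Fin n, (i' : ℕ) = (i : ℕ) + 1 ∧
        (∀ j, j < i → σ i < σ j) ∧ (∀ j, j < i' → σ i' < σ j)} := by
  subst h
  rcases Nat.eq_zero_or_pos n with hn | hn
  · subst hn
    rw [Nat.card_of_isEmpty, Nat.card_of_isEmpty, Nat.card_of_isEmpty]
  · have eA : {i : Fin n // (i : ℕ) = n - 1 ∧ ((foataPerm π) i : ℕ) = 0 ∧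
        ∀ j, j < i → foataPerm π i < foataPerm π j} ≃
        {x : Fin n // π x = x ∧ x = ⟨0, hn⟩} := by
      refine { toFun := fun p => ⟨⟨0, hn⟩, ?_, rfl⟩,
               invFun := fun q => ⟨⟨n - 1, by omega⟩, rfl, ?_, ?_⟩,
               left_inv := fun p => Subtype.ext (Fin.ext (p.2.1.symm)),
               right_inv := fun q => Subtype.ext q.2.2.symm }
      · obtain ⟨i, h1, h2, _⟩ := p
        have hil : i = ⟨n - 1, by omega⟩ := Fin.ext h1
        have hσ : foataPerm π ⟨n - 1, by omega⟩ = ⟨0, hn⟩ := Fin.ext (by rw [← hil]; exact h2)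
        exact (fixed0_iff π hn).2 hσ
      · have hfix : π ⟨0, hn⟩ = ⟨0, hn⟩ := by rw [← q.2.2]; exact q.2.1
        have := (fixed0_iff π hn).1 hfix
        rw [this]
      · intro j hj
        have hfix : π ⟨0, hn⟩ = ⟨0, hn⟩ := by rw [← q.2.2]; exact q.2.1
        have hP : P π (foataPerm π ⟨n - 1, by omega⟩) := by
          rw [(fixed0_iff π hn).1 hfix]
          exact P_of_fixed π hfix
        exact (LTR_iff π _).2 hP j hj
    have eB : {i : Fin n // ∃ i' : Fin n, (i' : ℕ) = (i : ℕ) + 1 ∧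
        (∀ j, j < i → foataPerm π i < foataPerm π j) ∧
        (∀ j, j < i' → foataPerm π i' < foataPerm π j)} ≃
        {x : Fin n // π x = x ∧ x ≠ ⟨0, hn⟩} := by
      refine { toFun := fun p => ⟨foataPerm π p.1, ?_, ?_⟩,
               invFun := fun q => ⟨(foataPerm π).symm q.1, ?_⟩,
               left_inv := fun p => Subtype.ext (by simp),
               right_inv := fun q => Subtype.ext (by simp) }
      · obtain ⟨i, i', hi', hL, hL'⟩ := p
        exact fixed_of_adjLTR π hi' hL hL'
      · obtain ⟨i, i', hi', hL, hL'⟩ := p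
        have hb : (i : ℕ) + 1 < n := by rw [← hi']; exact i'.isLt
        intro hzz
        have hfix : π (⟨0, hn⟩ : Fin n) = ⟨0, hn⟩ := by
          rw [← hzz]; exact fixed_of_adjLTR π hi' hL hL'
        have hlast := (fixed0_iff π hn).1 hfix
        have hil : i = ⟨n - 1, by omega⟩ := (foataPerm π).injective (by rw [hzz, hlast])
        have : (i : ℕ) = n - 1 := by rw [hil]
        omega
      · have hq1 : π q.1 = q.1 := q.2.1
        have hq2 : q.1 ≠ ⟨0, hn⟩ := q.2.2
        have hine : (foataPerm π).symm q.1 ≠ ⟨n - 1, by omega⟩ := by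
          intro he
          have h1 : foataPerm π ⟨n - 1, by omega⟩ = q.1 := by
            rw [← he, Equiv.apply_symm_apply]
          have h2 : cmin π q.1 = ⟨0, hn⟩ := by rw [← h1]; exact cmin_last π hn
          have h3 : cmin π q.1 = q.1 := cmin_eq_self_of_P π (P_of_fixed π hq1)
          exact hq2 (h3 ▸ h2)
        have hb : ((foataPerm π).symm q.1 : ℕ) + 1 < n := by
          have h1 := ((foataPerm π).symm q.1).isLt
          have h2 : ((foataPerm π).symm q.1 : ℕ) ≠ n - 1 := fun hc => hine (Fin.ext hc)
          omega
        refine ⟨⟨((foataPerm π).symm q.1 : ℕ) + 1, hb⟩, rfl, ?_, ?_⟩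
        · refine (LTR_iff π _).2 ?_
          rw [Equiv.apply_symm_apply]
          exact P_of_fixed π hq1
        · refine (LTR_iff π _).2 ?_
          rcases lemG_sigma π ((foataPerm π).symm q.1) hb with ⟨heq, _⟩ | ⟨hPP, _⟩
          · exfalso
            rw [Equiv.apply_symm_apply, hq1] at heq
            have h4 : (⟨((foataPerm π).symm q.1 : ℕ) + 1, hb⟩ : Fin n) =
                (foataPerm π).symm q.1 := by
              apply (foataPerm π).injective
              rw [heq, Equiv.apply_symm_apply]
            have h5 : ((foataPerm π).symm q.1 : ℕ) + 1 = ((foataPerm π).symm q.1 : ℕ) :=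
              congrArg Fin.val h4
            omega
          · exact hPP
    have hsplit : Nat.card {x : Fin n // π x = x} =
        Nat.card {x : Fin n // π x = x ∧ x = ⟨0, hn⟩} +
        Nat.card {x : Fin n // π x = x ∧ x ≠ ⟨0, hn⟩} := by
      classical
      rw [← Nat.card_sum]
      refine Nat.card_congr ?_
      exact ((Equiv.sumCompl (fun y : {x : Fin n // π x = x} => y.1 = ⟨0, hn⟩)).symm.trans
        (Equiv.sumCongr (Equiv.subtypeSubtypeEquivSubtypeInter
            (fun x : Fin n => π x = x) (fun x => x = ⟨0, hn⟩))
          ((Equiv.subtypeSubtypeEquivSubtypeInter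
            (fun x : Fin n => π x = x) (fun x => ¬ x = ⟨0, hn⟩)).trans
            (Equiv.subtypeEquivRight (p := fun x : Fin n => π x = x ∧ ¬ x = ⟨0, hn⟩)
              (q := fun x : Fin n => π x = x ∧ x ≠ ⟨0, hn⟩) (fun x => Iff.rfl)))))
    rw [Nat.card_congr eA, Nat.card_congr eB]
    exact hsplit
end

section
/- Let A(x) = \sum_{n≥0} a_2(n,0) x^n be the (formal) generating function for permutations with no adjacent transpositions in their cycle decomposition. Then A satisfies the differential equation x^2(1+x^2)A'(x) - (1+x^2)(1-x-x^2)A(x) + 1 - x^2 = 0 with A(0) = 1. -/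
open Finset Equiv

/-- Term of the inclusion-exclusion closed form. -/
def Tterm (n k : ℕ) : ℚ :=
  (-1)^k * (Nat.choose (n-k) k) * (Nat.factorial (n-2*k))

/-- The closed-form count. -/
def sSeq (n : ℕ) : ℚ := ∑ k ∈ range (n+1), Tterm n k

lemma Tterm_eq_zero {n k : ℕ} (h : n < 2*k) : Tterm n k = 0 := by
  have : n - k < k := by omega
  simp [Tterm, Nat.choose_eq_zero_of_lt this]

lemma sum_Tterm_eq (n M : ℕ) (h : n+1 ≤ M) : ∑ k ∈ range M, Tterm n k = sSeq n := by
  rw [sSeq, ← sum_subset (range_subset_range.2 h)]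
  intro k _ hk
  exact Tterm_eq_zero (by simp at hk; omega)

lemma sSeq_zero : sSeq 0 = 1 := by norm_num [sSeq, Tterm]
lemma sSeq_one : sSeq 1 = 1 := by norm_num [sSeq, Tterm, Finset.sum_range_succ]
lemma sSeq_two : sSeq 2 = 1 := by
  norm_num [sSeq, Tterm, Finset.sum_range_succ, Nat.factorial]
lemma sSeq_three : sSeq 3 = 4 := by
  norm_num [sSeq, Tterm, Finset.sum_range_succ, Nat.factorial]

lemma Tterm_shift (N k : ℕ) :
    Tterm (N+4) (k+2) = (N+4) * Tterm (N+3) (k+2) + (N+2) * Tterm (N+1) (k+1) + Tterm N k := by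
  rcases Nat.lt_or_ge N (2*k) with h | h
  · rw [Tterm_eq_zero (by omega), Tterm_eq_zero (by omega), Tterm_eq_zero (by omega),
      Tterm_eq_zero (by omega)]
    ring
  obtain ⟨j, rfl⟩ : ∃ j, N = 2*k + j := ⟨N - 2*k, by omega⟩
  match j with
  | 0 =>
    unfold Tterm
    have e1 : 2*k+0+4 - (k+2) = k+2 := by omega
    have e2 : 2*k+0+4 - 2*(k+2) = 0 := by omega
    have e3 : 2*k+0+3 - (k+2) = k+1 := by omega
    have e4 : 2*k+0+1 - (k+1) = k := by omega
    have e5 : 2*k+0 - k = k := by omega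
    have e6 : 2*k+0 - 2*k = 0 := by omega
    rw [e1, e2, e3, e4, e5, e6]
    have b1 : Nat.choose (k+1) (k+2) = 0 := Nat.choose_eq_zero_of_lt (by omega)
    have b2 : Nat.choose k (k+1) = 0 := Nat.choose_eq_zero_of_lt (by omega)
    rw [Nat.choose_self, Nat.choose_self, b1, b2]
    push_cast
    ring
  | 1 =>
    unfold Tterm
    have e1 : 2*k+1+4 - (k+2) = k+3 := by omega
    have e2 : 2*k+1+4 - 2*(k+2) = 1 := by omega
    have e3 : 2*k+1+3 - (k+2) = k+2 := by omega
    have e4 : 2*k+1+3 - 2*(k+2) = 0 := by omega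
    have e5 : 2*k+1+1 - (k+1) = k+1 := by omega
    have e6 : 2*k+1+1 - 2*(k+1) = 0 := by omega
    have e7 : 2*k+1 - k = k+1 := by omega
    have e8 : 2*k+1 - 2*k = 1 := by omega
    rw [e1, e2, e3, e4, e5, e6, e7, e8]
    rw [Nat.choose_self, Nat.choose_self, Nat.choose_succ_self_right, Nat.choose_succ_self_right]
    push_cast [Nat.factorial]
    ring
  | (j+2) =>
    unfold Tterm
    have e1 : 2*k+(j+2)+4 - (k+2) = k+j+4 := by omega
    have e2 : 2*k+(j+2)+4 - 2*(k+2) = j+2 := by omega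
    have e3 : 2*k+(j+2)+3 - (k+2) = k+j+3 := by omega
    have e4 : 2*k+(j+2)+3 - 2*(k+2) = j+1 := by omega
    have e5 : 2*k+(j+2)+1 - (k+1) = k+j+2 := by omega
    have e6 : 2*k+(j+2)+1 - 2*(k+1) = j+1 := by omega
    have e7 : 2*k+(j+2) - k = k+j+2 := by omega
    have e8 : 2*k+(j+2) - 2*k = j+2 := by omega
    rw [e1, e2, e3, e4, e5, e6, e7, e8]
    have h1 : (k+j+4).choose (k+2) = (k+j+3).choose (k+1) + (k+j+3).choose (k+2) :=
      Nat.choose_succ_succ (k+j+3) (k+1)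
    have h2 : (k+j+3).choose (k+1) = (k+j+2).choose k + (k+j+2).choose (k+1) :=
      Nat.choose_succ_succ (k+j+2) k
    have h3 : (k+j+3) * (k+j+2).choose (k+1) = (k+j+3).choose (k+2) * (k+2) :=
      Nat.add_one_mul_choose_eq (k+j+2) (k+1)
    have h4 : (j+2).factorial = (j+2) * (j+1).factorial := Nat.factorial_succ (j+1)
    have q1 : ((k+j+4).choose (k+2) : ℚ) = (k+j+3).choose (k+1) + (k+j+3).choose (k+2) := by
      exact_mod_cast congrArg (Nat.cast : ℕ → ℚ) h1
    have q2 : ((k+j+3).choose (k+1) : ℚ) = (k+j+2).choose k + (k+j+2).choose (k+1) := by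
      exact_mod_cast congrArg (Nat.cast : ℕ → ℚ) h2
    have q3 : ((k+j+3 : ℕ) : ℚ) * (k+j+2).choose (k+1) = (k+j+3).choose (k+2) * ((k+2 : ℕ) : ℚ) := by
      exact_mod_cast congrArg (Nat.cast : ℕ → ℚ) h3
    have q4 : ((j+2).factorial : ℚ) = ((j+2 : ℕ) : ℚ) * (j+1).factorial := by
      exact_mod_cast congrArg (Nat.cast : ℕ → ℚ) h4
    push_cast
    push_cast at q1 q2 q3 q4
    linear_combination ((-1:ℚ)^k) * (((j+2).factorial : ℚ) * q1 + ((j+2).factorial : ℚ) * q2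
      + 2 * ((j+1).factorial : ℚ) * q3
      + (((k+j+2).choose (k+1) : ℚ) + ((k+j+3).choose (k+2) : ℚ)) * q4)

lemma sSeq_rec (m : ℕ) :
    sSeq (m+4) = (m+4) * sSeq (m+3) + (m+2) * sSeq (m+1) + sSeq m := by
  have h0 : sSeq (m+4)
      = (∑ k ∈ range (m+3), Tterm (m+4) (k+2)) + Tterm (m+4) 1 + Tterm (m+4) 0 := by
    rw [sSeq, Finset.sum_range_succ' (fun k => Tterm (m+4) k) (m+4),
      Finset.sum_range_succ' (fun k => Tterm (m+4) (k+1)) (m+3)]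
  rw [h0, Finset.sum_congr rfl (fun k _ => Tterm_shift m k)]
  simp only [Finset.sum_add_distrib, ← Finset.mul_sum]
  have e1 : ∑ k ∈ range (m+3), Tterm (m+3) (k+2)
      = sSeq (m+3) - Tterm (m+3) 1 - Tterm (m+3) 0 := by
    have h := sum_Tterm_eq (m+3) (m+5) (by omega)
    rw [Finset.sum_range_succ' (fun k => Tterm (m+3) k) (m+4),
      Finset.sum_range_succ' (fun k => Tterm (m+3) (k+1)) (m+3)] at h
    linarith
  have e2 : ∑ k ∈ range (m+3), Tterm (m+1) (k+1) = sSeq (m+1) - Tterm (m+1) 0 := by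
    have h := sum_Tterm_eq (m+1) (m+4) (by omega)
    rw [Finset.sum_range_succ' (fun k => Tterm (m+1) k) (m+3)] at h
    linarith
  have e3 : ∑ k ∈ range (m+3), Tterm m k = sSeq m := sum_Tterm_eq m (m+3) (by omega)
  rw [e1, e2, e3]
  unfold Tterm
  have d1 : m+4-1 = m+3 := by omega
  have d2 : m+4-2*1 = m+2 := by omega
  have d3 : m+3-1 = m+2 := by omega
  have d4 : m+3-2*1 = m+1 := by omega
  simp only [d1, d2, d3, d4, Nat.sub_zero, Nat.mul_zero, pow_one, pow_zero,
    Nat.choose_zero_right, Nat.choose_one_right, Nat.cast_one]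
  have f1 : ((m+4).factorial : ℚ) = (m+4) * (m+3).factorial := by
    exact_mod_cast congrArg (Nat.cast : ℕ → ℚ) (Nat.factorial_succ (m+3))
  have f2 : ((m+3).factorial : ℚ) = (m+3) * (m+2).factorial := by
    exact_mod_cast congrArg (Nat.cast : ℕ → ℚ) (Nat.factorial_succ (m+2))
  have f3 : ((m+2).factorial : ℚ) = (m+2) * (m+1).factorial := by
    exact_mod_cast congrArg (Nat.cast : ℕ → ℚ) (Nat.factorial_succ (m+1))
  push_cast
  push_cast at f1 f2 f3
  linear_combination f1 + (1 - (m+4) + (m+3)) * f2 + (-(m:ℚ)-3) * f3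

/-- The set of permutations containing the cycle `(i, i+1)` (0-indexed). -/
def badSet (n i : ℕ) : Finset (Perm (Fin n)) :=
  univ.filter (fun π => ∀ j : Fin n,
    ((j:ℕ) = i → ((π j : ℕ)) = i+1) ∧ ((j:ℕ) = i+1 → ((π j : ℕ)) = i))

lemma card_inf_badSet {n : ℕ} {t : Finset ℕ} (ht : t ⊆ range (n-1))
    (hind : ∀ i ∈ t, i+1 ∉ t) :
    #(t.inf (badSet n)) = Nat.factorial (n - 2 * #t) := by
  classical
  have hb : ∀ i ∈ t, i + 1 < n := by
    intro i hi; have := mem_range.1 (ht hi); omega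
  set D : Fin n → Prop := fun x => (x:ℕ) ∈ t ∨ ((x:ℕ)-1 ∈ t ∧ 1 ≤ (x:ℕ)) with hD
  have : DecidablePred D := fun x => by rw [hD]; infer_instance
  set f : Fin n → Fin n := fun x =>
    if h : (x:ℕ) ∈ t then ⟨(x:ℕ)+1, hb _ h⟩
    else if h2 : (x:ℕ)-1 ∈ t ∧ 1 ≤ (x:ℕ) then ⟨(x:ℕ)-1, by omega⟩
    else x with hf
  have hfval : ∀ x : Fin n, ((x:ℕ) ∈ t → (f x : ℕ) = (x:ℕ)+1) ∧
      ((x:ℕ) ∉ t → (x:ℕ)-1 ∈ t ∧ 1 ≤ (x:ℕ) → (f x : ℕ) = (x:ℕ)-1) ∧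
      (¬ D x → f x = x) := by
    intro x
    refine ⟨fun h => by simp [hf, h], fun h h2 => by simp [hf, h, h2], fun h => ?_⟩
    have h1 : (x:ℕ) ∉ t := fun hc => h (Or.inl hc)
    have h2 : ¬ ((x:ℕ)-1 ∈ t ∧ 1 ≤ (x:ℕ)) := fun hc => h (Or.inr hc)
    simp [hf, h1, h2]
  have hinv : Function.Involutive f := by
    intro x
    by_cases h1 : (x:ℕ) ∈ t
    · have v1 : (f x : ℕ) = (x:ℕ)+1 := (hfval x).1 h1
      have h2 : ((f x : ℕ)) ∉ t := by rw [v1]; exact hind _ h1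
      have h3 : ((f x : ℕ))-1 ∈ t ∧ 1 ≤ ((f x : ℕ)) := by rw [v1]; simpa using h1
      have := ((hfval (f x)).2.1) h2 h3
      apply Fin.ext; rw [this, v1]; omega
    · by_cases h2 : (x:ℕ)-1 ∈ t ∧ 1 ≤ (x:ℕ)
      · have v1 : (f x : ℕ) = (x:ℕ)-1 := ((hfval x).2.1) h1 h2
        have h3 : ((f x : ℕ)) ∈ t := by rw [v1]; exact h2.1
        have := (hfval (f x)).1 h3
        apply Fin.ext; rw [this, v1]; omega
      · have hDx : ¬ D x := by
          intro hx
          rcases hx with hx | hx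
          · exact h1 hx
          · exact h2 hx
        rw [(hfval x).2.2 hDx, (hfval x).2.2 hDx]
  set τ : Perm (Fin n) := hinv.toPerm with hτ
  have hτval : ∀ x, τ x = f x := fun x => rfl
  have hτsq : τ * τ = 1 := by ext x; simp [hτval, hinv x]
  -- f maps D into D
  have hfD : ∀ x, D x → D (f x) := by
    intro x hx
    rcases hx with h1 | h2
    · right
      rw [(hfval x).1 h1]
      exact ⟨by simpa using h1, by omega⟩
    · have h1 : (x:ℕ) ∉ t := by
        intro hc
        have he : (x:ℕ)-1+1 = (x:ℕ) := by omega
        have := hind _ h2.1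
        rw [he] at this
        exact this hc
      left; rw [(hfval x).2.1 h1 h2]; exact h2.1
  -- step 1 : membership description
  have step1 : t.inf (badSet n) = univ.filter (fun π : Perm (Fin n) => ∀ x : Fin n, D x → π x = f x) := by
    ext π
    rw [Finset.mem_inf, mem_filter]
    constructor
    · intro h
      refine ⟨mem_univ _, fun x hx => ?_⟩
      rcases hx with h1 | h2
      · have hmem := h _ h1
        rw [badSet, mem_filter] at hmem
        have hv := (hmem.2 x).1 rfl
        apply Fin.ext
        rw [hv, (hfval x).1 h1]
      · have hmem := h _ h2.1
        rw [badSet, mem_filter] at hmem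
        have hv := (hmem.2 x).2 (by omega)
        apply Fin.ext
        have h1 : (x:ℕ) ∉ t := by
          intro hc
          have he := hind _ h2.1
          have hee : (x:ℕ)-1+1 = (x:ℕ) := by omega
          rw [hee] at he
          exact he hc
        rw [hv, (hfval x).2.1 h1 h2]
    · rintro ⟨-, h⟩ i hi
      rw [badSet, mem_filter]
      refine ⟨mem_univ _, fun j => ⟨fun hji => ?_, fun hji => ?_⟩⟩
      · have hDj : D j := Or.inl (hji ▸ hi)
        rw [h j hDj, (hfval j).1 (hji ▸ hi), hji]
      · have h1 : (j:ℕ) ∉ t := by rw [hji]; exact hind _ hi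
        have h2 : (j:ℕ)-1 ∈ t ∧ 1 ≤ (j:ℕ) := by
          constructor
          · have he : (j:ℕ)-1 = i := by omega
            rw [he]; exact hi
          · omega
        rw [h j (Or.inr h2), (hfval j).2.1 h1 h2]
        omega
  -- step 2 : translate by τ
  have step2 : #(univ.filter (fun π : Perm (Fin n) => ∀ x : Fin n, D x → π x = f x))
      = #(univ.filter (fun π : Perm (Fin n) => ∀ x : Fin n, D x → π x = x)) := by
    refine Finset.card_bij' (fun π _ => π * τ) (fun σ _ => σ * τ) ?_ ?_ ?_ ?_
    · intro π hπ
      rw [mem_filter] at hπ ⊢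
      refine ⟨mem_univ _, fun x hx => ?_⟩
      have : (π * τ) x = π (f x) := by rw [Perm.mul_apply, hτval]
      rw [this, hπ.2 (f x) (hfD x hx), hinv x]
    · intro σ hσ
      rw [mem_filter] at hσ ⊢
      refine ⟨mem_univ _, fun x hx => ?_⟩
      have : (σ * τ) x = σ (f x) := by rw [Perm.mul_apply, hτval]
      rw [this, hσ.2 (f x) (hfD x hx)]
    · intro π _; show π * τ * τ = π; rw [mul_assoc, hτsq, mul_one]
    · intro σ _; show σ * τ * τ = σ; rw [mul_assoc, hτsq, mul_one]
  -- step 3 : count permutations fixing D pointwise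
  have step3 : #(univ.filter (fun π : Perm (Fin n) => ∀ x : Fin n, D x → π x = x))
      = Nat.factorial (n - Fintype.card {x : Fin n // D x}) := by
    rw [← Fintype.card_subtype]
    have E : {π : Perm (Fin n) // ∀ x : Fin n, D x → π x = x} ≃ Perm {x : Fin n // ¬ D x} := by
      refine ((Equiv.Perm.subtypeEquivSubtypePerm (fun x => ¬ D x)).trans
        (Equiv.subtypeEquivRight fun π => ?_)).symm
      constructor
      · intro h x hx
        exact h x (not_not_intro hx)
      · intro h x hx
        exact h x (not_not.mp hx)
    rw [Fintype.card_congr E, Fintype.card_perm, Fintype.card_subtype_compl,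
      Fintype.card_fin]
  -- step 4 : |D| = 2 * #t
  have step4 : Fintype.card {x : Fin n // D x} = 2 * #t := by
    rw [Fintype.card_subtype]
    have hsplit : univ.filter (fun x : Fin n => D x)
        = univ.filter (fun x : Fin n => (x:ℕ) ∈ t)
          ∪ univ.filter (fun x : Fin n => (x:ℕ)-1 ∈ t ∧ 1 ≤ (x:ℕ)) := by
      ext x
      simp only [mem_filter, mem_union, mem_univ, true_and]
      exact Iff.rfl
    have hdisj : Disjoint (univ.filter (fun x : Fin n => (x:ℕ) ∈ t))
        (univ.filter (fun x : Fin n => (x:ℕ)-1 ∈ t ∧ 1 ≤ (x:ℕ))) := by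
      rw [Finset.disjoint_left]
      intro x hx hx2
      rw [mem_filter] at hx hx2
      have he := hind _ hx2.2.1
      have : (x:ℕ)-1+1 = (x:ℕ) := by omega
      rw [this] at he
      exact he hx.2
    rw [hsplit, Finset.card_union_of_disjoint hdisj]
    have c1 : #(univ.filter (fun x : Fin n => (x:ℕ) ∈ t)) = #t := by
      refine Finset.card_bij (fun x _ => (x:ℕ)) ?_ ?_ ?_
      · intro x hx; exact (mem_filter.1 hx).2
      · intro x _ y _ h; exact Fin.ext h
      · intro i hi
        exact ⟨⟨i, by have := hb _ hi; omega⟩, mem_filter.2 ⟨mem_univ _, hi⟩, rfl⟩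
    have c2 : #(univ.filter (fun x : Fin n => (x:ℕ)-1 ∈ t ∧ 1 ≤ (x:ℕ))) = #t := by
      refine Finset.card_bij (fun x _ => (x:ℕ)-1) ?_ ?_ ?_
      · intro x hx; exact (mem_filter.1 hx).2.1
      · intro x hx y hy h
        have h1 := (mem_filter.1 hx).2.2
        have h2 := (mem_filter.1 hy).2.2
        have h' : (x:ℕ)-1 = (y:ℕ)-1 := h
        apply Fin.ext; omega
      · intro i hi
        refine ⟨⟨i+1, hb _ hi⟩, mem_filter.2 ⟨mem_univ _, ?_, ?_⟩, ?_⟩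
        · show (i+1)-1 ∈ t
          simpa using hi
        · show 1 ≤ i+1
          omega
        · show (i+1)-1 = i
          omega
    rw [c1, c2]
    omega
  rw [step1, step2, step3, step4]

lemma inf_badSet_eq_empty {n : ℕ} {t : Finset ℕ} (ht : t ⊆ range (n-1))
    {i : ℕ} (hi : i ∈ t) (hi2 : i+1 ∈ t) : t.inf (badSet n) = ∅ := by
  rw [Finset.eq_empty_iff_forall_notMem]
  intro π hπ
  rw [Finset.mem_inf] at hπ
  have hb : i+1 < n := by have := mem_range.1 (ht hi2); omega
  have m1 := hπ i hi
  have m2 := hπ (i+1) hi2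
  rw [badSet, mem_filter] at m1 m2
  have e1 := (m1.2 ⟨i+1, hb⟩).2 rfl
  have e2 := (m2.2 ⟨i+1, hb⟩).1 rfl
  omega

lemma card_indep : ∀ m k : ℕ,
    #((powersetCard k (range m)).filter (fun t => ∀ i ∈ t, i+1 ∉ t))
      = Nat.choose (m+1-k) k := by
  intro m
  induction m using Nat.strong_induction_on with
  | _ m IH =>
  match m with
  | 0 =>
    intro k
    rw [filter_true_of_mem, Finset.card_powersetCard, Finset.card_range]
    · match k with
      | 0 => rfl
      | k+1 => rw [Nat.choose_eq_zero_of_lt (by omega)]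
               have h : 0+1-(k+1) = 0 := by omega
               rw [h, Nat.choose_eq_zero_of_lt (by omega)]
    · intro t ht i hit hit2
      have := Finset.mem_powersetCard.1 ht
      have := mem_range.1 (this.1 hit)
      omega
  | 1 =>
    intro k
    rw [filter_true_of_mem, Finset.card_powersetCard, Finset.card_range]
    · match k with
      | 0 => rfl
      | 1 => rfl
      | k+2 => rw [Nat.choose_eq_zero_of_lt (by omega)]
               have h : 1+1-(k+2) = 0 := by omega
               rw [h, Nat.choose_eq_zero_of_lt (by omega)]
    · intro t ht i hit hit2
      have h1 := Finset.mem_powersetCard.1 ht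
      have h2 := mem_range.1 (h1.1 hit)
      have h3 := mem_range.1 (h1.1 hit2)
      omega
  | M+2 =>
    intro k
    match k with
    | 0 =>
      rw [Finset.powersetCard_zero]
      rw [filter_true_of_mem (by rintro t ht; simp at ht; subst ht; simp)]
      simp
    | K+1 =>
      have hsplit := Finset.card_filter_add_card_filter_not
        (s := (powersetCard (K+1) (range (M+2))).filter (fun t => ∀ i ∈ t, i+1 ∉ t))
        (p := fun t => M+1 ∈ t)
      have e1 : ((powersetCard (K+1) (range (M+2))).filter
            (fun t => ∀ i ∈ t, i+1 ∉ t)).filter (fun t => ¬ M+1 ∈ t)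
          = (powersetCard (K+1) (range (M+1))).filter (fun t => ∀ i ∈ t, i+1 ∉ t) := by
        ext t
        simp only [mem_filter, Finset.mem_powersetCard]
        constructor
        · rintro ⟨⟨⟨hsub, hcard⟩, hind⟩, hnot⟩
          refine ⟨⟨fun x hx => ?_, hcard⟩, hind⟩
          have := mem_range.1 (hsub hx)
          rw [mem_range]
          rcases Nat.lt_or_ge x (M+1) with h | h
          · exact h
          · exfalso; apply hnot; have : x = M+1 := by omega
            rwa [← this]
        · rintro ⟨⟨hsub, hcard⟩, hind⟩
          refine ⟨⟨⟨fun x hx => ?_, hcard⟩, hind⟩, fun hc => ?_⟩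
          · have := mem_range.1 (hsub hx); rw [mem_range]; omega
          · have := mem_range.1 (hsub hc); omega
      have e2 : #(((powersetCard (K+1) (range (M+2))).filter
            (fun t => ∀ i ∈ t, i+1 ∉ t)).filter (fun t => M+1 ∈ t))
          = #((powersetCard K (range M)).filter (fun t => ∀ i ∈ t, i+1 ∉ t)) := by
        refine Finset.card_bij' (fun t _ => t.erase (M+1)) (fun u _ => insert (M+1) u)
          ?_ ?_ ?_ ?_
        · intro t ht
          simp only [mem_filter, Finset.mem_powersetCard] at ht ⊢
          obtain ⟨⟨⟨hsub, hcard⟩, hind⟩, hmem⟩ := ht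
          refine ⟨⟨fun x hx => ?_, ?_⟩, fun i hi hi2 => ?_⟩
          · rw [Finset.mem_erase] at hx
            have := mem_range.1 (hsub hx.2)
            rw [mem_range]
            have hM : M ∉ t := fun hc => (hind M hc) hmem
            rcases Nat.lt_or_ge x M with h | h
            · exact h
            · exfalso
              have : x = M ∨ x = M+1 := by omega
              rcases this with h | h
              · exact hM (h ▸ hx.2)
              · exact hx.1 h
          · rw [Finset.card_erase_of_mem hmem, hcard]
            omega
          · rw [Finset.mem_erase] at hi hi2
            exact (hind i hi.2) hi2.2
        · intro u hu
          simp only [mem_filter, Finset.mem_powersetCard] at hu ⊢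
          obtain ⟨⟨hsub, hcard⟩, hind⟩ := hu
          have hM1 : M+1 ∉ u := fun hc => by have := mem_range.1 (hsub hc); omega
          refine ⟨⟨⟨fun x hx => ?_, ?_⟩, fun i hi hi2 => ?_⟩, Finset.mem_insert_self _ _⟩
          · rcases Finset.mem_insert.1 hx with h | h
            · rw [mem_range]; omega
            · have := mem_range.1 (hsub h); rw [mem_range]; omega
          · rw [Finset.card_insert_of_notMem hM1, hcard]
          · rcases Finset.mem_insert.1 hi with h | h
            · subst h
              rcases Finset.mem_insert.1 hi2 with h2 | h2
              · omega
              · have := mem_range.1 (hsub h2); omega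
            · rcases Finset.mem_insert.1 hi2 with h2 | h2
              · have := mem_range.1 (hsub h); omega
              · exact (hind i h) h2
        · intro t ht
          simp only [mem_filter] at ht
          exact Finset.insert_erase ht.2
        · intro u hu
          simp only [mem_filter, Finset.mem_powersetCard] at hu
          have hM1 : M+1 ∉ u := fun hc => by have := mem_range.1 (hu.1.1 hc); omega
          exact Finset.erase_insert hM1
      have IH1 := IH (M+1) (by omega) (K+1)
      have IH2 := IH M (by omega) K
      rw [e1, IH1] at hsplit
      rw [e2, IH2] at hsplit
      rcases Nat.lt_or_ge (M+1) K with h | h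
      · have z1 : (M+1+1-(K+1)).choose (K+1) = 0 := Nat.choose_eq_zero_of_lt (by omega)
        have z2 : (M+1-K).choose K = 0 := Nat.choose_eq_zero_of_lt (by omega)
        have z3 : (M+2+1-(K+1)).choose (K+1) = 0 := Nat.choose_eq_zero_of_lt (by omega)
        rw [z3]
        rw [z1, z2] at hsplit
        omega
      · have p1 : M+1+1-(K+1) = M+1-K := by omega
        have p2 : M+2+1-(K+1) = (M+1-K)+1 := by omega
        rw [p1] at hsplit
        rw [p2]
        have hp := Nat.choose_succ_succ (M+1-K) K
        simp only [Nat.succ_eq_add_one] at hp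
        rw [hp]
        omega


lemma avoid_iff_mem_inf {n : ℕ} (π : Perm (Fin n)) :
    (∀ i : ℕ, ¬ IsAdjCycle 2 π i) ↔ π ∈ (range (n-1)).inf (fun i => (badSet n i)ᶜ) := by
  rw [Finset.mem_inf]
  constructor
  · intro h i hi
    rw [Finset.mem_compl]
    intro hbad
    apply h i
    have hn : i+1 < n := by have := mem_range.1 hi; omega
    rw [badSet, mem_filter] at hbad
    refine ⟨by omega, ?_, ?_⟩
    · intro j hj1 hj2
      have hji : (j:ℕ) = i := by omega
      have := (hbad.2 j).1 hji
      omega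
    · intro j hj
      have := (hbad.2 j).2 (by omega)
      omega
  · intro h i hadj
    obtain ⟨hle, h2, h3⟩ := hadj
    have hi : i ∈ range (n-1) := mem_range.2 (by omega)
    have hc := h i hi
    rw [Finset.mem_compl] at hc
    apply hc
    rw [badSet, mem_filter]
    refine ⟨mem_univ _, fun j => ⟨fun hj => ?_, fun hj => ?_⟩⟩
    · have := h2 j (by omega) (by omega)
      omega
    · have := h3 j (by omega)
      omega

lemma count_eq (n : ℕ) :
    ((Nat.card {π : Perm (Fin n) // ∀ i : ℕ, ¬ IsAdjCycle 2 π i}) : ℚ) = sSeq n := by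
  classical
  have h1 : Nat.card {π : Perm (Fin n) // ∀ i : ℕ, ¬ IsAdjCycle 2 π i}
      = #((range (n-1)).inf (fun i => (badSet n i)ᶜ)) := by
    rw [← Nat.card_eq_finsetCard]
    exact Nat.card_congr (Equiv.subtypeEquivRight avoid_iff_mem_inf)
  have h2 := Finset.inclusion_exclusion_card_inf_compl (range (n-1)) (badSet n)
  have h3 : ((Nat.card {π : Perm (Fin n) // ∀ i : ℕ, ¬ IsAdjCycle 2 π i}) : ℚ)
      = ∑ t ∈ (range (n-1)).powerset, (-1:ℚ)^#t * #(t.inf (badSet n)) := by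
    rw [h1]
    have := congrArg (Int.cast : ℤ → ℚ) h2
    push_cast at this
    exact this
  rw [h3]
  have h4 : ∀ t ∈ (range (n-1)).powerset,
      (-1:ℚ)^#t * #(t.inf (badSet n))
        = if (∀ i ∈ t, i+1 ∉ t) then (-1:ℚ)^#t * Nat.factorial (n - 2 * #t) else 0 := by
    intro t ht
    rw [Finset.mem_powerset] at ht
    by_cases hind : ∀ i ∈ t, i+1 ∉ t
    · rw [if_pos hind, card_inf_badSet ht hind]
    · rw [if_neg hind]
      push_neg at hind
      obtain ⟨i, hi, hi2⟩ := hind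
      rw [inf_badSet_eq_empty ht hi hi2]
      simp
  rw [Finset.sum_congr rfl h4, Finset.sum_powerset]
  have h5 : ∀ j ∈ range (#(range (n-1)) + 1),
      (∑ t ∈ powersetCard j (range (n-1)),
        if (∀ i ∈ t, i+1 ∉ t) then (-1:ℚ)^#t * Nat.factorial (n - 2 * #t) else 0)
      = Tterm n j := by
    intro j _
    rw [← Finset.sum_filter]
    have hc : ∀ t ∈ (powersetCard j (range (n-1))).filter (fun t => ∀ i ∈ t, i+1 ∉ t),
        (-1:ℚ)^#t * Nat.factorial (n - 2 * #t)
          = (-1:ℚ)^j * Nat.factorial (n - 2 * j) := by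
      intro t ht
      rw [mem_filter, Finset.mem_powersetCard] at ht
      rw [ht.1.2]
    rw [Finset.sum_congr rfl hc, Finset.sum_const, card_indep]
    have hch : (n-1+1-j).choose j = (n-j).choose j := by
      match n with
      | 0 =>
        match j with
        | 0 => rfl
        | j+1 =>
          rw [Nat.choose_eq_zero_of_lt (by omega), Nat.choose_eq_zero_of_lt (by omega)]
      | n+1 => rfl
    rw [hch, Tterm]
    ring
  rw [Finset.sum_congr rfl h5, Finset.card_range]
  rcases Nat.eq_zero_or_pos n with hn | hn
  · subst hn; rfl
  have hr : n - 1 + 1 = n := by omega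
  rw [hr, sSeq]
  rw [Finset.sum_range_succ, Tterm]
  rw [Nat.choose_eq_zero_of_lt (by omega)]
  push_cast
  ring

open PowerSeries in
/-- The generating function `A(x)` of the numbers of permutations with no adjacent
transposition in their cycle decomposition satisfies
`x²(1+x²)A'(x) - (1+x²)(1-x-x²)A(x) + 1 - x² = 0` with `A(0) = 1`. -/
theorem genFun_no_adjacent_transpositions_ODE :
    let A : PowerSeries ℚ := PowerSeries.mk fun m =>
      ((Nat.card {π : Equiv.Perm (Fin m) // ∀ i : ℕ, ¬ IsAdjCycle 2 π i}) : ℚ)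
    X ^ 2 * (1 + X ^ 2) * (d⁄dX ℚ A) - (1 + X ^ 2) * (1 - X - X ^ 2) * A
        + 1 - X ^ 2 = 0 ∧
      PowerSeries.constantCoeff A = 1 := by
  intro A
  have hA : ∀ m : ℕ, (coeff m) A = sSeq m := by
    intro m
    have hdef : A = PowerSeries.mk fun m =>
        ((Nat.card {π : Equiv.Perm (Fin m) // ∀ i : ℕ, ¬ IsAdjCycle 2 π i}) : ℚ) := rfl
    rw [hdef, coeff_mk]
    exact count_eq m
  constructor
  · have expand : X ^ 2 * (1 + X ^ 2) * (d⁄dX ℚ A) - (1 + X ^ 2) * (1 - X - X ^ 2) * A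
          + 1 - X ^ 2
        = (X^2*(d⁄dX ℚ A) + X^4*(d⁄dX ℚ A) + X^1*A + X^3*A + X^4*A + 1)
          - (A + X^2) := by ring
    rw [expand, sub_eq_zero]
    ext n
    simp only [map_add, coeff_X_pow_mul', coeff_derivative, coeff_one, coeff_X_pow, hA]
    rcases n with - | n
    · norm_num [sSeq_zero]
    rcases n with - | n
    · norm_num [sSeq_zero, sSeq_one]
    rcases n with - | n
    · norm_num [sSeq_one, sSeq_two, hA]
    rcases n with - | n
    · norm_num [sSeq_zero, sSeq_two, sSeq_three, hA]
    · have e1 : n+1+1+1+1-2 = n+2 := by omega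
      have e2 : n+1+1+1+1-4 = n := by omega
      have e3 : n+1+1+1+1-1 = n+3 := by omega
      have e4 : n+1+1+1+1-3 = n+1 := by omega
      rw [if_pos (by omega : (2:ℕ) ≤ n+1+1+1+1), if_pos (by omega : (4:ℕ) ≤ n+1+1+1+1),
        if_pos (by omega : (1:ℕ) ≤ n+1+1+1+1), if_pos (by omega : (3:ℕ) ≤ n+1+1+1+1),
        if_neg (by omega : ¬ (n+1+1+1+1 = 0)), if_neg (by omega : ¬ (n+1+1+1+1 = 2)),
        e1, e2, e3, e4]
      have hrec := sSeq_rec n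
      have e5 : n+2+1 = n+3 := by omega
      have e6 : n+3+1 = n+4 := by omega
      rw [e5, if_pos (by omega : (4:ℕ) ≤ n+3+1), e6]
      push_cast
      push_cast at hrec
      linarith [hrec]
  · rw [← coeff_zero_eq_constantCoeff_apply, hA 0, sSeq_zero]
end

section
/- For n ≥ 2, the number of permutations of {1,...,n} avoiding the mesh pattern p equals a_2(n,0) + a_2(n-2,0), where a_2(m,0) is the number of permutations of {1,...,m} with no adjacent transposition (cycle of the form (i,i+1)) in their cycle decomposition, and avoiding p means: there is no triple of positions i < j < k with σ(i) < σ(k) < σ(j) such that the relevant shaded regions of p are empty (pattern p = mesh pattern with points (1,1),(2,3),(3,2) and shaded cells (0,2),(0,3),(1,2),(1,3),(2,0),(2,1),(2,2),(2,3),(3,1),(3,2)). -/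
/-- `l` lies in the region of cell `(a, b)` for an occurrence of a mesh pattern with
underlying classical pattern `132` at positions `i₁ < i₂ < i₃` in `σ`
(rows determined by the sorted values `σ i₁ < σ i₃ < σ i₂`). -/
def InReg132 {n : ℕ} (σ : Equiv.Perm (Fin n)) (i1 i2 i3 : Fin n) (a b : ℕ) (l : Fin n) :
    Prop :=
  ((a = 0 ∧ l < i1) ∨ (a = 1 ∧ i1 < l ∧ l < i2) ∨ (a = 2 ∧ i2 < l ∧ l < i3) ∨
      (a = 3 ∧ i3 < l)) ∧
  ((b = 0 ∧ σ l < σ i1) ∨ (b = 1 ∧ σ i1 < σ l ∧ σ l < σ i3) ∨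
      (b = 2 ∧ σ i3 < σ l ∧ σ l < σ i2) ∨ (b = 3 ∧ σ i2 < σ l))

/-- Occurrence of the mesh pattern with underlying pattern `132` and shaded cells `R`. -/
def Occ132 {n : ℕ} (R : List (ℕ × ℕ)) (σ : Equiv.Perm (Fin n)) (i1 i2 i3 : Fin n) : Prop :=
  i1 < i2 ∧ i2 < i3 ∧ σ i1 < σ i3 ∧ σ i3 < σ i2 ∧
    ∀ c ∈ R, ∀ l : Fin n, ¬ InReg132 σ i1 i2 i3 c.1 c.2 l

/-- Avoidance of a mesh pattern with underlying classical pattern `132`. -/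
def Avoid132 {n : ℕ} (R : List (ℕ × ℕ)) (σ : Equiv.Perm (Fin n)) : Prop :=
  ¬ ∃ i1 i2 i3 : Fin n, Occ132 R σ i1 i2 i3

/-- The shaded cells of the mesh pattern `p`. -/
def cellsP : List (ℕ × ℕ) :=
  [(0,2),(0,3),(1,2),(1,3),(2,0),(2,1),(2,2),(2,3),(3,1),(3,2)]

/-- The shaded cells of the mesh pattern `s₂'`. -/
def cellsS2' : List (ℕ × ℕ) :=
  [(0,1),(0,2),(0,3),(1,1),(1,2),(1,3),(2,0),(2,1),(2,2),(2,3),(3,1),(3,2)]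


open Finset Equiv

namespace MeshAux
variable {n : ℕ}

/-- prefix max (as ℕ) of `σ` over positions `< t`; `0` if none. -/
def PM (σ : Perm (Fin n)) (t : ℕ) : ℕ :=
  (Finset.univ.filter (fun x : Fin n => (x : ℕ) < t)).sup (fun x => (σ x : ℕ))

/-- occurrence condition for the mesh pattern p at position t -/
def FC (σ : Perm (Fin n)) (t : ℕ) : Prop :=
  1 ≤ t ∧ ∃ x y : Fin n, (x:ℕ) = t ∧ (y:ℕ) = t + 1 ∧
    (σ x : ℕ) = PM σ t + 2 ∧ (σ y : ℕ) = PM σ t + 1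

/-- adjacent transposition condition -/
def EC (π : Perm (Fin n)) (i : ℕ) : Prop :=
  ∃ x y : Fin n, (x:ℕ) = i ∧ (y:ℕ) = i + 1 ∧ (π x : ℕ) = i + 1 ∧ (π y : ℕ) = i

def NoTwo (S : Finset ℕ) : Prop := ∀ x ∈ S, x + 1 ∉ S

open Classical in
noncomputable def ind (p : Prop) : ℤ := if p then 1 else 0

lemma ind_pos {p : Prop} (h : p) : ind p = 1 := by unfold ind; exact if_pos h

lemma ind_neg {p : Prop} (h : ¬ p) : ind p = 0 := by unfold ind; exact if_neg h

open Classical in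
lemma card_subtype_sum {α : Type*} [Fintype α] (p : α → Prop) :
    ((Nat.card {a : α // p a} : ℕ) : ℤ) = ∑ a : α, ind (p a) := by
  rw [Nat.card_eq_fintype_card, Fintype.card_subtype, Finset.card_filter]
  push_cast
  apply Finset.sum_congr rfl
  intro a _
  by_cases h : p a
  · rw [if_pos h, ind_pos h]
  · rw [if_neg h, ind_neg h]

open Classical in
lemma IE {α : Type*} [Fintype α] (m : Finset ℕ) (P : ℕ → α → Prop) :
    ((Nat.card {a : α // ∀ t ∈ m, ¬ P t a} : ℕ) : ℤ) =
    ∑ S ∈ m.powerset, (-1)^S.card * ((Nat.card {a : α // ∀ t ∈ S, P t a} : ℕ) : ℤ) := by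
  have key : ∀ a : α, (∑ S ∈ m.powerset, (-1:ℤ)^S.card * ind (∀ t ∈ S, P t a))
      = ind (∀ t ∈ m, ¬ P t a) := by
    intro a
    set D := m.filter (fun t => P t a) with hD
    have hsub : D.powerset ⊆ m.powerset := powerset_mono.2 (filter_subset _ _)
    have h1 : ∑ S ∈ m.powerset, (-1:ℤ)^S.card * ind (∀ t ∈ S, P t a)
        = ∑ S ∈ D.powerset, (-1:ℤ)^S.card := by
      rw [← sum_subset hsub]
      · apply sum_congr rfl
        intro S hS
        rw [mem_powerset] at hS
        have h2 : ∀ t ∈ S, P t a := fun t ht => (mem_filter.1 (hS ht)).2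
        rw [ind_pos h2, mul_one]
      · intro S hS hSD
        rw [mem_powerset] at hS hSD
        have h3 : ¬ ∀ t ∈ S, P t a := by
          intro hall
          exact hSD fun t ht => mem_filter.2 ⟨hS ht, hall t ht⟩
        rw [ind_neg h3, mul_zero]
    have hDe : D = ∅ ↔ ∀ t ∈ m, ¬ P t a := by rw [hD, filter_eq_empty_iff]
    rw [h1, Finset.sum_powerset_neg_one_pow_card]
    by_cases hD0 : D = ∅
    · rw [if_pos hD0, ind_pos (hDe.1 hD0)]
    · rw [if_neg hD0, ind_neg (fun hc => hD0 (hDe.2 hc))]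
  calc ((Nat.card {a : α // ∀ t ∈ m, ¬ P t a} : ℕ) : ℤ)
      = ∑ a : α, ind (∀ t ∈ m, ¬ P t a) := card_subtype_sum _
    _ = ∑ a : α, ∑ S ∈ m.powerset, (-1:ℤ)^S.card * ind (∀ t ∈ S, P t a) := by
        apply sum_congr rfl; intro a _; rw [key a]
    _ = ∑ S ∈ m.powerset, (-1:ℤ)^S.card * ((Nat.card {a : α // ∀ t ∈ S, P t a} : ℕ) : ℤ) := by
        rw [Finset.sum_comm]
        apply sum_congr rfl
        intro S _
        rw [card_subtype_sum, Finset.mul_sum]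

section Surgery
variable {t b : ℕ}

def vsh (hbn : b + 2 ≤ n) (y : Fin (n-2)) : Fin n :=
  if _h : (y:ℕ) < b then ⟨y, by omega⟩ else ⟨(y:ℕ)+2, by have := y.isLt; omega⟩

def vdrop (hbn : b + 2 ≤ n) (w : Fin n) (h1 : (w:ℕ) ≠ b) (h2 : (w:ℕ) ≠ b+1) : Fin (n-2) :=
  if _h : (w:ℕ) < b then ⟨w, by omega⟩ else ⟨(w:ℕ)-2, by have := w.isLt; omega⟩

def pins (htn : t + 2 ≤ n) (j : Fin (n-2)) : Fin n :=
  if _h : (j:ℕ) < t then ⟨j, by omega⟩ else ⟨(j:ℕ)+2, by have := j.isLt; omega⟩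

def pdrop (htn : t + 2 ≤ n) (x : Fin n) (h1 : (x:ℕ) ≠ t) (h2 : (x:ℕ) ≠ t+1) : Fin (n-2) :=
  if _h : (x:ℕ) < t then ⟨x, by omega⟩ else ⟨(x:ℕ)-2, by have := x.isLt; omega⟩

lemma vsh_val (hbn : b + 2 ≤ n) (y : Fin (n-2)) :
    (vsh hbn y : ℕ) = if (y:ℕ) < b then (y:ℕ) else (y:ℕ)+2 := by
  unfold vsh; split_ifs with h <;> simp [h]

lemma vdrop_val (hbn : b + 2 ≤ n) (w : Fin n) (h1 : (w:ℕ) ≠ b) (h2 : (w:ℕ) ≠ b+1) :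
    (vdrop hbn w h1 h2 : ℕ) = if (w:ℕ) < b then (w:ℕ) else (w:ℕ)-2 := by
  unfold vdrop; split_ifs with h <;> simp [h]

lemma pins_val (htn : t + 2 ≤ n) (j : Fin (n-2)) :
    (pins htn j : ℕ) = if (j:ℕ) < t then (j:ℕ) else (j:ℕ)+2 := by
  unfold pins; split_ifs with h <;> simp [h]

lemma pdrop_val (htn : t + 2 ≤ n) (x : Fin n) (h1 : (x:ℕ) ≠ t) (h2 : (x:ℕ) ≠ t+1) :
    (pdrop htn x h1 h2 : ℕ) = if (x:ℕ) < t then (x:ℕ) else (x:ℕ)-2 := by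
  unfold pdrop; split_ifs with h <;> simp [h]

lemma vsh_ne (hbn : b + 2 ≤ n) (y : Fin (n-2)) :
    (vsh hbn y : ℕ) ≠ b ∧ (vsh hbn y : ℕ) ≠ b+1 := by
  rw [vsh_val]; split_ifs with h <;> omega

lemma vdrop_vsh (hbn : b + 2 ≤ n) (y : Fin (n-2)) (h1 : _) (h2 : _) :
    vdrop hbn (vsh hbn y) h1 h2 = y := by
  apply Fin.ext; rw [vdrop_val, vsh_val]; have := y.isLt
  split_ifs <;> omega

lemma vsh_vdrop (hbn : b + 2 ≤ n) (w : Fin n) (h1 : (w:ℕ) ≠ b) (h2 : (w:ℕ) ≠ b+1) :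
    vsh hbn (vdrop hbn w h1 h2) = w := by
  apply Fin.ext; rw [vsh_val, vdrop_val]; have := w.isLt
  split_ifs <;> omega

lemma pins_ne (htn : t + 2 ≤ n) (j : Fin (n-2)) :
    (pins htn j : ℕ) ≠ t ∧ (pins htn j : ℕ) ≠ t+1 := by
  rw [pins_val]; split_ifs with h <;> omega

lemma pdrop_pins (htn : t + 2 ≤ n) (j : Fin (n-2)) (h1 : _) (h2 : _) :
    pdrop htn (pins htn j) h1 h2 = j := by
  apply Fin.ext; rw [pdrop_val, pins_val]; have := j.isLt
  split_ifs <;> omega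

lemma pins_pdrop (htn : t + 2 ≤ n) (x : Fin n) (h1 : (x:ℕ) ≠ t) (h2 : (x:ℕ) ≠ t+1) :
    pins htn (pdrop htn x h1 h2) = x := by
  apply Fin.ext; rw [pins_val, pdrop_val]; have := x.isLt
  split_ifs <;> omega

def insFun (htn : t + 2 ≤ n) (hbn : b + 2 ≤ n) (τ : Perm (Fin (n-2))) : Fin n → Fin n :=
  fun x =>
    if _hx1 : (x:ℕ) = t then ⟨b+1, by omega⟩
    else if _hx2 : (x:ℕ) = t+1 then ⟨b, by omega⟩
    else vsh hbn (τ (pdrop htn x _hx1 _hx2))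

def insInv (htn : t + 2 ≤ n) (hbn : b + 2 ≤ n) (τ : Perm (Fin (n-2))) : Fin n → Fin n :=
  fun w =>
    if _hw1 : (w:ℕ) = b+1 then ⟨t, by omega⟩
    else if _hw2 : (w:ℕ) = b then ⟨t+1, by omega⟩
    else pins htn (τ.symm (vdrop hbn w _hw2 _hw1))

lemma insFun_val_t (htn : t + 2 ≤ n) (hbn : b + 2 ≤ n) (τ : Perm (Fin (n-2))) (x : Fin n)
    (hx : (x:ℕ) = t) : (insFun htn hbn τ x : ℕ) = b+1 := by
  unfold insFun; rw [dif_pos hx]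

lemma insFun_val_t1 (htn : t + 2 ≤ n) (hbn : b + 2 ≤ n) (τ : Perm (Fin (n-2))) (x : Fin n)
    (hx : (x:ℕ) = t+1) : (insFun htn hbn τ x : ℕ) = b := by
  unfold insFun; rw [dif_neg (by omega), dif_pos hx]

lemma insFun_val_other (htn : t + 2 ≤ n) (hbn : b + 2 ≤ n) (τ : Perm (Fin (n-2))) (x : Fin n)
    (hx1 : (x:ℕ) ≠ t) (hx2 : (x:ℕ) ≠ t+1) :
    insFun htn hbn τ x = vsh hbn (τ (pdrop htn x hx1 hx2)) := by
  unfold insFun; rw [dif_neg hx1, dif_neg hx2]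

lemma insFun_leftInv (htn : t + 2 ≤ n) (hbn : b + 2 ≤ n) (τ : Perm (Fin (n-2))) :
    Function.LeftInverse (insInv htn hbn τ) (insFun htn hbn τ) := by
  intro x
  by_cases hx1 : (x:ℕ) = t
  · have h := insFun_val_t htn hbn τ x hx1
    unfold insInv; rw [dif_pos h]; exact Fin.ext hx1.symm
  · by_cases hx2 : (x:ℕ) = t+1
    · have h := insFun_val_t1 htn hbn τ x hx2
      unfold insInv; rw [dif_neg (by omega), dif_pos h]; exact Fin.ext hx2.symm
    · rw [insFun_val_other htn hbn τ x hx1 hx2]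
      have hv := vsh_ne hbn (τ (pdrop htn x hx1 hx2))
      unfold insInv; rw [dif_neg hv.2, dif_neg hv.1, vdrop_vsh, Equiv.symm_apply_apply,
        pins_pdrop htn x hx1 hx2]

lemma insFun_rightInv (htn : t + 2 ≤ n) (hbn : b + 2 ≤ n) (τ : Perm (Fin (n-2))) :
    Function.RightInverse (insInv htn hbn τ) (insFun htn hbn τ) := by
  intro w
  by_cases hw1 : (w:ℕ) = b+1
  · apply Fin.ext
    unfold insInv; rw [dif_pos hw1, insFun_val_t htn hbn τ _ rfl, hw1]
  · by_cases hw2 : (w:ℕ) = b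
    · apply Fin.ext
      unfold insInv; rw [dif_neg hw1, dif_pos hw2, insFun_val_t1 htn hbn τ _ rfl, hw2]
    · unfold insInv; rw [dif_neg hw1, dif_neg hw2]
      have hp := pins_ne htn (τ.symm (vdrop hbn w hw2 hw1))
      rw [insFun_val_other htn hbn τ _ hp.1 hp.2, pdrop_pins, Equiv.apply_symm_apply,
        vsh_vdrop hbn w hw2 hw1]

/-- insertion of the descending pair `(b+1, b)` at positions `(t, t+1)`. -/
def insP (htn : t + 2 ≤ n) (hbn : b + 2 ≤ n) (τ : Perm (Fin (n-2))) : Perm (Fin n) :=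
  ⟨insFun htn hbn τ, insInv htn hbn τ, insFun_leftInv htn hbn τ, insFun_rightInv htn hbn τ⟩

lemma insP_val_t (htn : t + 2 ≤ n) (hbn : b + 2 ≤ n) (τ : Perm (Fin (n-2))) (x : Fin n)
    (hx : (x:ℕ) = t) : (insP htn hbn τ x : ℕ) = b+1 := insFun_val_t htn hbn τ x hx

lemma insP_val_t1 (htn : t + 2 ≤ n) (hbn : b + 2 ≤ n) (τ : Perm (Fin (n-2))) (x : Fin n)
    (hx : (x:ℕ) = t+1) : (insP htn hbn τ x : ℕ) = b := insFun_val_t1 htn hbn τ x hx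

lemma insP_val_other (htn : t + 2 ≤ n) (hbn : b + 2 ≤ n) (τ : Perm (Fin (n-2))) (x : Fin n)
    (hx1 : (x:ℕ) ≠ t) (hx2 : (x:ℕ) ≠ t+1) :
    insP htn hbn τ x = vsh hbn (τ (pdrop htn x hx1 hx2)) := insFun_val_other htn hbn τ x hx1 hx2

lemma insP_inj (htn : t + 2 ≤ n) (hbn : b + 2 ≤ n) :
    Function.Injective (insP (n := n) htn hbn) := by
  intro τ1 τ2 h
  ext j
  have hp := pins_ne htn j
  have h0 : insP htn hbn τ1 (pins htn j) = insP htn hbn τ2 (pins htn j) := by rw [h]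
  rw [insP_val_other htn hbn τ1 _ hp.1 hp.2, insP_val_other htn hbn τ2 _ hp.1 hp.2,
    pdrop_pins] at h0
  have h1 := congrArg (fun w : Fin n => (w:ℕ)) h0
  simp only [vsh_val] at h1
  have i1 := (τ1 j).isLt; have i2 := (τ2 j).isLt
  split_ifs at h1 <;> omega

lemma insP_surj (htn : t + 2 ≤ n) (hbn : b + 2 ≤ n) (σ : Perm (Fin n))
    (xt xt1 : Fin n) (hxt : (xt:ℕ) = t) (hxt1 : (xt1:ℕ) = t+1)
    (h1 : (σ xt : ℕ) = b+1) (h2 : (σ xt1 : ℕ) = b) :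
    ∃ τ : Perm (Fin (n-2)), insP htn hbn τ = σ := by
  have hne : ∀ x : Fin n, (x:ℕ) ≠ t → (x:ℕ) ≠ t+1 → (σ x : ℕ) ≠ b ∧ (σ x : ℕ) ≠ b+1 := by
    intro x hx1 hx2
    constructor
    · intro hc
      have hxx : σ x = σ xt1 := Fin.ext (by omega)
      have := σ.injective hxx
      rw [this] at hx2; exact hx2 hxt1
    · intro hc
      have hxx : σ x = σ xt := Fin.ext (by omega)
      have := σ.injective hxx
      rw [this] at hx1; exact hx1 hxt
  have hz : ∀ j : Fin (n-2),
      (σ.symm (vsh hbn j) : ℕ) ≠ t ∧ (σ.symm (vsh hbn j) : ℕ) ≠ t+1 := by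
    intro j
    have hv := vsh_ne hbn j
    constructor
    · intro hc
      have hxx : σ.symm (vsh hbn j) = xt := Fin.ext (by omega)
      have h3 := congrArg σ hxx
      rw [Equiv.apply_symm_apply] at h3
      have h4 := congrArg (fun w : Fin n => (w:ℕ)) h3
      simp only [h1] at h4
      exact hv.2 h4
    · intro hc
      have hxx : σ.symm (vsh hbn j) = xt1 := Fin.ext (by omega)
      have h3 := congrArg σ hxx
      rw [Equiv.apply_symm_apply] at h3
      have h4 := congrArg (fun w : Fin n => (w:ℕ)) h3
      simp only [h2] at h4
      exact hv.1 h4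
  refine ⟨⟨fun j => vdrop hbn (σ (pins htn j))
      (hne _ (pins_ne htn j).1 (pins_ne htn j).2).1
      (hne _ (pins_ne htn j).1 (pins_ne htn j).2).2,
    fun j => pdrop htn (σ.symm (vsh hbn j)) (hz j).1 (hz j).2, ?_, ?_⟩, ?_⟩
  · intro j
    have hp := pins_ne htn j
    have hv := hne _ hp.1 hp.2
    simp only
    apply Fin.ext
    rw [pdrop_val]
    have e2 : σ.symm (vsh hbn (vdrop hbn (σ (pins htn j)) hv.1 hv.2)) = pins htn j := by
      rw [vsh_vdrop hbn _ hv.1 hv.2, Equiv.symm_apply_apply]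
    have hval := congrArg Fin.val e2
    rw [hval, pins_val]
    have := j.isLt
    split_ifs <;> omega
  · intro j
    simp only
    apply Fin.ext
    rw [vdrop_val]
    have e2 : σ (pins htn (pdrop htn (σ.symm (vsh hbn j)) (hz j).1 (hz j).2)) = vsh hbn j := by
      rw [pins_pdrop htn _ (hz j).1 (hz j).2]
      exact Equiv.apply_symm_apply σ _
    have hval := congrArg Fin.val e2
    rw [hval, vsh_val]
    have := j.isLt
    split_ifs <;> omega
  · apply Equiv.ext
    intro x
    by_cases hx1 : (x:ℕ) = t
    · apply Fin.ext
      rw [insP_val_t htn hbn _ x hx1]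
      have hxx : x = xt := Fin.ext (by omega)
      rw [hxx, h1]
    · by_cases hx2 : (x:ℕ) = t+1
      · apply Fin.ext
        rw [insP_val_t1 htn hbn _ x hx2]
        have hxx : x = xt1 := Fin.ext (by omega)
        rw [hxx, h2]
      · rw [insP_val_other htn hbn _ x hx1 hx2]
        apply Fin.ext
        simp only [Equiv.coe_fn_mk]
        have hcongr : pins htn (pdrop htn x hx1 hx2) = x := pins_pdrop htn x hx1 hx2
        have hv := hne x hx1 hx2
        have ev : (σ (pins htn (pdrop htn x hx1 hx2)) : ℕ) = (σ x : ℕ) := by rw [hcongr]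
        rw [vsh_val, vdrop_val, ev]
        have := (σ x).isLt
        split_ifs <;> omega

end Surgery

section Transfer
variable {t b : ℕ}

lemma PM_le (σ : Perm (Fin n)) (s : ℕ) (x : Fin n) (hx : (x:ℕ) < s) : (σ x : ℕ) ≤ PM σ s := by
  unfold PM
  exact Finset.le_sup (f := fun z => ((σ z : Fin n) : ℕ)) (mem_filter.2 ⟨mem_univ _, hx⟩)

lemma apply_val_congr (τ : Perm (Fin n)) {a c : Fin n} (h : (a:ℕ) = (c:ℕ)) :
    (τ a : ℕ) = (τ c : ℕ) := by rw [Fin.ext h]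

lemma PM_lt (σ : Perm (Fin n)) (s : ℕ) (h : 0 < n) : PM σ s < n := by
  rw [PM, Finset.sup_lt_iff h]
  intro x _; exact (σ x).isLt

lemma PM_succ (σ : Perm (Fin n)) (s : ℕ) (xs : Fin n) (hxs : (xs:ℕ) = s) :
    PM σ (s+1) = max ((σ xs : ℕ)) (PM σ s) := by
  unfold PM
  have : (Finset.univ.filter (fun x : Fin n => (x:ℕ) < s+1))
      = insert xs (Finset.univ.filter (fun x : Fin n => (x:ℕ) < s)) := by
    ext z
    simp only [mem_filter, mem_univ, true_and, mem_insert]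
    constructor
    · intro hz
      by_cases hzs : (z:ℕ) = s
      · left; exact Fin.ext (by omega)
      · right; omega
    · rintro (rfl | hz)
      · omega
      · omega
  rw [this, Finset.sup_insert]

lemma insP_val_lt (htn : t + 2 ≤ n) (hbn : b + 2 ≤ n) (τ : Perm (Fin (n-2)))
    (hpre : ∀ z : Fin (n-2), (z:ℕ) < t → (τ z : ℕ) < b)
    (x : Fin n) (hx : (x:ℕ) < t) :
    (insP htn hbn τ x : ℕ) = (τ ⟨(x:ℕ), by omega⟩ : ℕ) := by
  have hx1 : (x:ℕ) ≠ t := by omega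
  have hx2 : (x:ℕ) ≠ t+1 := by omega
  rw [insP_val_other htn hbn τ x hx1 hx2, vsh_val]
  have hp : pdrop htn x hx1 hx2 = ⟨(x:ℕ), by omega⟩ := by
    apply Fin.ext; rw [pdrop_val]; simp [hx]
  rw [hp, if_pos (hpre _ (by simpa using hx))]

lemma PM_insP (htn : t + 2 ≤ n) (hbn : b + 2 ≤ n) (τ : Perm (Fin (n-2)))
    (hpre : ∀ z : Fin (n-2), (z:ℕ) < t → (τ z : ℕ) < b)
    (s : ℕ) (hs : s ≤ t) : PM (insP htn hbn τ) s = PM τ s := by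
  apply le_antisymm
  · apply Finset.sup_le
    intro x hx
    have hxs : (x:ℕ) < s := (mem_filter.1 hx).2
    rw [insP_val_lt htn hbn τ hpre x (by omega)]
    exact PM_le τ s _ (by simpa using hxs)
  · apply Finset.sup_le
    intro z hz
    have hzs : (z:ℕ) < s := (mem_filter.1 hz).2
    have hzn : (z:ℕ) < n := by have := z.isLt; omega
    have : (τ z : ℕ) = (insP htn hbn τ ⟨(z:ℕ), hzn⟩ : ℕ) := by
      rw [insP_val_lt htn hbn τ hpre _ (by simpa using (show (z:ℕ) < t by omega))]
    rw [this]
    exact PM_le _ s _ (by simpa using hzs)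

lemma FC_insP (htn : t + 2 ≤ n) (hbn : b + 2 ≤ n) (τ : Perm (Fin (n-2)))
    (hpre : ∀ z : Fin (n-2), (z:ℕ) < t → (τ z : ℕ) < b)
    (s : ℕ) (hst : s + 1 < t) : FC (insP htn hbn τ) s ↔ FC τ s := by
  have hPM : PM (insP htn hbn τ) s = PM τ s := PM_insP htn hbn τ hpre s (by omega)
  constructor
  · rintro ⟨hs1, x, y, hx, hy, hvx, hvy⟩
    refine ⟨hs1, ⟨s, by omega⟩, ⟨s+1, by omega⟩, rfl, rfl, ?_, ?_⟩
    · have : (insP htn hbn τ x : ℕ) = (τ ⟨s, by omega⟩ : ℕ) := by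
        rw [insP_val_lt htn hbn τ hpre x (by omega)]
        exact apply_val_congr τ (by simp [hx])
      rw [this] at hvx; rw [← hPM]; exact hvx
    · have : (insP htn hbn τ y : ℕ) = (τ ⟨s+1, by omega⟩ : ℕ) := by
        rw [insP_val_lt htn hbn τ hpre y (by omega)]
        exact apply_val_congr τ (by simp [hy])
      rw [this] at hvy; rw [← hPM]; exact hvy
  · rintro ⟨hs1, x, y, hx, hy, hvx, hvy⟩
    refine ⟨hs1, ⟨s, by omega⟩, ⟨s+1, by omega⟩, rfl, rfl, ?_, ?_⟩
    · have : (insP htn hbn τ ⟨s, by omega⟩ : ℕ) = (τ x : ℕ) := by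
        rw [insP_val_lt htn hbn τ hpre _ (by simp; omega)]
        exact apply_val_congr τ (by simp [hx])
      rw [this, hPM]; exact hvx
    · have : (insP htn hbn τ ⟨s+1, by omega⟩ : ℕ) = (τ y : ℕ) := by
        rw [insP_val_lt htn hbn τ hpre _ (by simp; omega)]
        exact apply_val_congr τ (by simp [hy])
      rw [this, hPM]; exact hvy

lemma EC_insP (htn : t + 2 ≤ n) (hbn : b + 2 ≤ n) (τ : Perm (Fin (n-2)))
    (s : ℕ) (hst : s + 1 < t) (hsb : s + 1 < b) : EC (insP htn hbn τ) s ↔ EC τ s := by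
  have key : ∀ (x : Fin n) (z : Fin (n-2)), (x:ℕ) = (z:ℕ) → (x:ℕ) < t →
      ∀ v : ℕ, v < b → ((insP htn hbn τ x : ℕ) = v ↔ (τ z : ℕ) = v) := by
    intro x z hxz hxt v hv
    have hx1 : (x:ℕ) ≠ t := by omega
    have hx2 : (x:ℕ) ≠ t+1 := by omega
    rw [insP_val_other htn hbn τ x hx1 hx2, vsh_val]
    have hp : pdrop htn x hx1 hx2 = z := by
      apply Fin.ext; rw [pdrop_val, if_pos hxt]; exact hxz
    rw [hp]
    split_ifs with h
    · tauto
    · omega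
  constructor
  · rintro ⟨x, y, hx, hy, hvx, hvy⟩
    refine ⟨⟨s, by omega⟩, ⟨s+1, by omega⟩, rfl, rfl, ?_, ?_⟩
    · exact (key x ⟨s, by omega⟩ (by simp [hx]) (by omega) (s+1) (by omega)).1 hvx
    · exact (key y ⟨s+1, by omega⟩ (by simp [hy]) (by omega) s (by omega)).1 hvy
  · rintro ⟨x, y, hx, hy, hvx, hvy⟩
    refine ⟨⟨s, by omega⟩, ⟨s+1, by omega⟩, rfl, rfl, ?_, ?_⟩
    · exact (key ⟨s, by omega⟩ x (by simp [hx]) (show s < t by omega) (s+1) (by omega)).2 hvx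
    · exact (key ⟨s+1, by omega⟩ y (by simp [hy]) (show s+1 < t by omega) s (by omega)).2 hvy

end Transfer

section Counts

lemma card_perm_nat (n : ℕ) : Nat.card (Perm (Fin n)) = n.factorial := by
  rw [Nat.card_eq_fintype_card, Fintype.card_perm, Fintype.card_fin]

lemma countF : ∀ (k n : ℕ) (S : Finset ℕ), S.card = k → (∀ j ∈ S, j + 3 ≤ n) → NoTwo S →
    Nat.card {σ : Perm (Fin n) // ∀ j ∈ S, FC σ (j+1)} = (n - 2*k).factorial := by
  intro k
  induction k with
  | zero =>
    intro n S hcard _ _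
    rw [Finset.card_eq_zero] at hcard
    subst hcard
    have e : {σ : Perm (Fin n) // ∀ j ∈ (∅ : Finset ℕ), FC σ (j+1)} ≃ Perm (Fin n) :=
      Equiv.subtypeUnivEquiv (by intro σ; simp)
    rw [Nat.card_congr e, card_perm_nat]
    norm_num
  | succ k ih =>
    intro n S hcard hbd hnt
    have hne : S.Nonempty := by rw [← Finset.card_pos, hcard]; omega
    set t0 := S.max' hne with ht0
    have ht0S : t0 ∈ S := S.max'_mem hne
    have htn : (t0+1) + 2 ≤ n := by have := hbd t0 ht0S; omega
    set S' := S.erase t0 with hS'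
    have hcard' : S'.card = k := by
      rw [hS', Finset.card_erase_of_mem ht0S, hcard]
      omega
    have hjlt : ∀ j ∈ S', j + 2 ≤ t0 := by
      intro j hj
      have hjS := Finset.mem_of_mem_erase hj
      have hjne : j ≠ t0 := Finset.ne_of_mem_erase hj
      have hle : j ≤ t0 := S.le_max' j hjS
      have : j + 1 ≠ t0 := by intro hc; exact (hnt j hjS) (hc ▸ ht0S)
      omega
    have hbd' : ∀ j ∈ S', j + 3 ≤ n - 2 := by
      intro j hj; have := hjlt j hj; omega
    have hnt' : NoTwo S' := fun x hx hc =>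
      hnt x (Finset.mem_of_mem_erase hx) (Finset.mem_of_mem_erase hc)
    have hb : ∀ τ : Perm (Fin (n-2)), (PM τ (t0+1) + 1) + 2 ≤ n := by
      intro τ
      have := PM_lt τ (t0+1) (show 0 < n-2 by omega)
      omega
    have hpre : ∀ τ : Perm (Fin (n-2)), ∀ z : Fin (n-2), (z:ℕ) < t0+1 →
        (τ z : ℕ) < PM τ (t0+1) + 1 := by
      intro τ z hz
      have := PM_le τ (t0+1) z hz
      omega
    set f : {τ : Perm (Fin (n-2)) // ∀ j ∈ S', FC τ (j+1)} →
        {σ : Perm (Fin n) // ∀ j ∈ S, FC σ (j+1)} :=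
      fun τs => ⟨insP htn (hb τs.1) τs.1, by
        intro j hj
        have hjn := hbd j hj
        by_cases hjt : j = t0
        · refine ⟨by omega, ⟨j+1, by omega⟩, ⟨j+2, by omega⟩, rfl, rfl, ?_, ?_⟩
          · rw [insP_val_t htn (hb τs.1) τs.1 _ (by simp [hjt]),
              PM_insP htn (hb τs.1) τs.1 (hpre τs.1) (j+1) (by omega)]
            rw [hjt]
          · rw [insP_val_t1 htn (hb τs.1) τs.1 _ (by simp [hjt]),
              PM_insP htn (hb τs.1) τs.1 (hpre τs.1) (j+1) (by omega)]
            rw [hjt]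
        · have hjS' : j ∈ S' := Finset.mem_erase.2 ⟨hjt, hj⟩
          have := hjlt j hjS'
          exact (FC_insP htn (hb τs.1) τs.1 (hpre τs.1) (j+1) (by omega)).2 (τs.2 j hjS')⟩
      with hf
    have hinj : Function.Injective f := by
      intro τ1 τ2 heq
      have heq' : insP htn (hb τ1.1) τ1.1 = insP htn (hb τ2.1) τ2.1 := congrArg Subtype.val heq
      have hbeq : PM τ1.1 (t0+1) + 1 = PM τ2.1 (t0+1) + 1 := by
        have h1 := insP_val_t htn (hb τ1.1) τ1.1 ⟨t0+1, by omega⟩ rfl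
        have h2 := insP_val_t htn (hb τ2.1) τ2.1 ⟨t0+1, by omega⟩ rfl
        rw [heq'] at h1
        omega
      apply Subtype.ext
      have : ∀ b1 b2 : ℕ, b1 = b2 → ∀ (p1 : b1 + 2 ≤ n) (p2 : b2 + 2 ≤ n)
          (u1 u2 : Perm (Fin (n-2))), insP htn p1 u1 = insP htn p2 u2 → u1 = u2 := by
        rintro b1 b2 rfl p1 p2 u1 u2 h
        exact insP_inj htn p1 h
      exact this _ _ hbeq _ _ _ _ heq'
    have hsurj : Function.Surjective f := by
      rintro ⟨σ, hσ⟩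
      obtain ⟨-, x, y, hx, hy, hvx, hvy⟩ := hσ t0 ht0S
      have hbσ : (PM σ (t0+1) + 1) + 2 ≤ n := by
        have := (σ x).isLt
        omega
      obtain ⟨τ, hτ⟩ := insP_surj htn hbσ σ x y hx hy (by omega) (by omega)
      have hpreσ : ∀ z : Fin (n-2), (z:ℕ) < t0+1 → (τ z : ℕ) < PM σ (t0+1) + 1 := by
        intro z hz
        by_contra hge
        have hzn : (z:ℕ) < n := by have := z.isLt; omega
        have h1 : (insP htn hbσ τ ⟨(z:ℕ), hzn⟩ : ℕ) = (vsh hbσ (τ (pdrop htn ⟨(z:ℕ), hzn⟩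
            (by simp; omega) (by simp; omega))) : ℕ) := by
          rw [insP_val_other htn hbσ τ _ (by simp; omega) (by simp; omega)]
        have hpd : pdrop htn (⟨(z:ℕ), hzn⟩ : Fin n) (by simp; omega) (by simp; omega) = z := by
          apply Fin.ext; rw [pdrop_val]; simp; omega
        rw [hpd, vsh_val, if_neg (by omega)] at h1
        have h2 : (σ ⟨(z:ℕ), hzn⟩ : ℕ) ≤ PM σ (t0+1) := PM_le σ (t0+1) _ (by simpa using hz)
        have h3 : σ (⟨(z:ℕ), hzn⟩ : Fin n) = insP htn hbσ τ ⟨(z:ℕ), hzn⟩ := by rw [hτ]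
        rw [h3] at h2
        omega
      have hPMeq : PM τ (t0+1) = PM σ (t0+1) := by
        have := PM_insP htn hbσ τ hpreσ (t0+1) (le_refl _)
        rw [hτ] at this
        omega
      have hcons : ∀ j ∈ S', FC τ (j+1) := by
        intro j hj
        have := hjlt j hj
        have := (FC_insP htn hbσ τ hpreσ (j+1) (by omega)).1
        rw [hτ] at this
        exact this (hσ j (Finset.mem_of_mem_erase hj))
      refine ⟨⟨τ, hcons⟩, ?_⟩
      apply Subtype.ext
      show insP htn (hb τ) τ = σ
      have : ∀ b1 b2 : ℕ, b1 = b2 → ∀ (p1 : b1 + 2 ≤ n) (p2 : b2 + 2 ≤ n),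
          insP htn p1 τ = insP htn p2 τ := by
        rintro b1 b2 rfl p1 p2; rfl
      rw [this _ _ (by omega : PM τ (t0+1) + 1 = PM σ (t0+1) + 1) (hb τ) hbσ]
      exact hτ
    have hcardeq := Nat.card_eq_of_bijective f ⟨hinj, hsurj⟩
    rw [← hcardeq, ih (n-2) S' hcard' hbd' hnt']
    congr 1
    omega

lemma countE : ∀ (k n : ℕ) (S : Finset ℕ), S.card = k → (∀ i ∈ S, i + 2 ≤ n) → NoTwo S →
    Nat.card {π : Perm (Fin n) // ∀ i ∈ S, EC π i} = (n - 2*k).factorial := by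
  intro k
  induction k with
  | zero =>
    intro n S hcard _ _
    rw [Finset.card_eq_zero] at hcard
    subst hcard
    have e : {π : Perm (Fin n) // ∀ i ∈ (∅ : Finset ℕ), EC π i} ≃ Perm (Fin n) :=
      Equiv.subtypeUnivEquiv (by intro π; simp)
    rw [Nat.card_congr e, card_perm_nat]
    norm_num
  | succ k ih =>
    intro n S hcard hbd hnt
    have hne : S.Nonempty := by rw [← Finset.card_pos, hcard]; omega
    set t0 := S.max' hne with ht0
    have ht0S : t0 ∈ S := S.max'_mem hne
    have htn : t0 + 2 ≤ n := hbd t0 ht0S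
    set S' := S.erase t0 with hS'
    have hcard' : S'.card = k := by
      rw [hS', Finset.card_erase_of_mem ht0S, hcard]
      omega
    have hjlt : ∀ j ∈ S', j + 2 ≤ t0 := by
      intro j hj
      have hjS := Finset.mem_of_mem_erase hj
      have hjne : j ≠ t0 := Finset.ne_of_mem_erase hj
      have hle : j ≤ t0 := S.le_max' j hjS
      have : j + 1 ≠ t0 := by intro hc; exact (hnt j hjS) (hc ▸ ht0S)
      omega
    have hbd' : ∀ j ∈ S', j + 2 ≤ n - 2 := by
      intro j hj; have := hjlt j hj; omega
    have hnt' : NoTwo S' := fun x hx hc =>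
      hnt x (Finset.mem_of_mem_erase hx) (Finset.mem_of_mem_erase hc)
    set f : {τ : Perm (Fin (n-2)) // ∀ i ∈ S', EC τ i} →
        {π : Perm (Fin n) // ∀ i ∈ S, EC π i} :=
      fun τs => ⟨insP htn htn τs.1, by
        intro j hj
        have hjn := hbd j hj
        by_cases hjt : j = t0
        · refine ⟨⟨j, by omega⟩, ⟨j+1, by omega⟩, rfl, rfl, ?_, ?_⟩
          · rw [insP_val_t htn htn τs.1 _ (by simp [hjt]), hjt]
          · rw [insP_val_t1 htn htn τs.1 _ (by simp [hjt]), hjt]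
        · have hjS' : j ∈ S' := Finset.mem_erase.2 ⟨hjt, hj⟩
          have := hjlt j hjS'
          exact (EC_insP htn htn τs.1 j (by omega) (by omega)).2 (τs.2 j hjS')⟩
      with hf
    have hinj : Function.Injective f := by
      intro τ1 τ2 heq
      exact Subtype.ext (insP_inj htn htn (congrArg Subtype.val heq))
    have hsurj : Function.Surjective f := by
      rintro ⟨π, hπ⟩
      obtain ⟨x, y, hx, hy, hvx, hvy⟩ := hπ t0 ht0S
      obtain ⟨τ, hτ⟩ := insP_surj htn htn π x y hx hy (by omega) (by omega)
      have hcons : ∀ i ∈ S', EC τ i := by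
        intro j hj
        have := hjlt j hj
        have h1 := (EC_insP htn htn τ j (by omega) (by omega)).1
        rw [hτ] at h1
        exact h1 (hπ j (Finset.mem_of_mem_erase hj))
      exact ⟨⟨τ, hcons⟩, Subtype.ext hτ⟩
    have hcardeq := Nat.card_eq_of_bijective f ⟨hinj, hsurj⟩
    rw [← hcardeq, ih (n-2) S' hcard' hbd' hnt']
    congr 1
    omega

lemma zeroF (n : ℕ) (S : Finset ℕ) (j0 : ℕ) (hj : j0 ∈ S) (hj1 : j0 + 1 ∈ S) :
    Nat.card {σ : Perm (Fin n) // ∀ j ∈ S, FC σ (j+1)} = 0 := by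
  rw [Nat.card_eq_zero]
  left
  constructor
  rintro ⟨σ, hσ⟩
  obtain ⟨-, x, y, hx, hy, hvx, hvy⟩ := hσ j0 hj
  obtain ⟨-, x', y', hx', hy', hvx', hvy'⟩ := hσ (j0+1) hj1
  have hxy : x' = y := Fin.ext (by omega)
  have hPM : PM σ (j0+1+1) = max ((σ x : ℕ)) (PM σ (j0+1)) := PM_succ σ (j0+1) x hx
  rw [hxy] at hvx'
  omega

lemma zeroE (n : ℕ) (S : Finset ℕ) (i0 : ℕ) (hi : i0 ∈ S) (hi1 : i0 + 1 ∈ S) :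
    Nat.card {π : Perm (Fin n) // ∀ i ∈ S, EC π i} = 0 := by
  rw [Nat.card_eq_zero]
  left
  constructor
  rintro ⟨π, hπ⟩
  obtain ⟨x, y, hx, hy, hvx, hvy⟩ := hπ i0 hi
  obtain ⟨x', y', hx', hy', hvx', hvy'⟩ := hπ (i0+1) hi1
  have hxy : x' = y := Fin.ext (by omega)
  rw [hxy] at hvx'
  omega

end Counts

section Char

lemma adj_iff_EC (π : Perm (Fin n)) (i : ℕ) : IsAdjCycle 2 π i ↔ EC π i := by
  constructor
  · rintro ⟨h1, h2, h3⟩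
    refine ⟨⟨i, by omega⟩, ⟨i+1, by omega⟩, rfl, rfl, ?_, ?_⟩
    · exact h2 ⟨i, by omega⟩ (by simp) (by simp)
    · exact h3 ⟨i+1, by omega⟩ (by simp)
  · rintro ⟨x, y, hx, hy, hvx, hvy⟩
    have hn : i + 2 ≤ n := by have := y.isLt; omega
    refine ⟨hn, ?_, ?_⟩
    · intro j hj1 hj2
      have hjx : j = x := Fin.ext (by omega)
      rw [hjx, hvx]
      omega
    · intro j hj
      have hjy : j = y := Fin.ext (by omega)
      rw [hjy, hvy]

lemma allAdj_iff (π : Perm (Fin n)) :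
    (∀ i : ℕ, ¬ IsAdjCycle 2 π i) ↔ ∀ i ∈ Finset.range (n-1), ¬ EC π i := by
  constructor
  · intro h i _
    rw [← adj_iff_EC]; exact h i
  · intro h i hadj
    have hEC := (adj_iff_EC π i).1 hadj
    obtain ⟨x, y, hx, hy, -, -⟩ := hEC
    have hmem : i ∈ Finset.range (n-1) := by
      rw [Finset.mem_range]; have := y.isLt; omega
    exact h i hmem ((adj_iff_EC π i).1 hadj)

lemma fin_val_eq_of_apply_eq (σ : Perm (Fin n)) {a c : Fin n}
    (h : (σ a : ℕ) = (σ c : ℕ)) : (a:ℕ) = (c:ℕ) :=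
  congrArg Fin.val (σ.injective (Fin.ext h))

lemma occ_forward (σ : Perm (Fin n)) (i1 i2 i3 : Fin n) (h : Occ132 cellsP σ i1 i2 i3) :
    ∃ j ∈ Finset.range (n-2), FC σ (j+1) := by
  obtain ⟨h12, h23, hv13, hv32, hsh⟩ := h
  rw [Fin.lt_def] at h12 h23 hv13 hv32
  have h02 := hsh (0,2) (by simp [cellsP])
  have h03 := hsh (0,3) (by simp [cellsP])
  have h12s := hsh (1,2) (by simp [cellsP])
  have h13s := hsh (1,3) (by simp [cellsP])
  have h20 := hsh (2,0) (by simp [cellsP])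
  have h21 := hsh (2,1) (by simp [cellsP])
  have h22 := hsh (2,2) (by simp [cellsP])
  have h23s := hsh (2,3) (by simp [cellsP])
  have h31 := hsh (3,1) (by simp [cellsP])
  have h32 := hsh (3,2) (by simp [cellsP])
  have hstep1 : (i3:ℕ) = (i2:ℕ) + 1 := by
    by_contra hne
    set l : Fin n := ⟨(i2:ℕ)+1, by have := i3.isLt; omega⟩ with hl
    have hlv : (l:ℕ) = (i2:ℕ)+1 := rfl
    have hne1 : (σ l : ℕ) ≠ (σ i1 : ℕ) := fun hc => by
      have := fin_val_eq_of_apply_eq σ hc; omega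
    have hne2 : (σ l : ℕ) ≠ (σ i2 : ℕ) := fun hc => by
      have := fin_val_eq_of_apply_eq σ hc; omega
    have hne3 : (σ l : ℕ) ≠ (σ i3 : ℕ) := fun hc => by
      have := fin_val_eq_of_apply_eq σ hc; omega
    have hcol : i2 < l ∧ l < i3 := by
      constructor <;> (rw [Fin.lt_def]; omega)
    have hdisj : (σ l : ℕ) < σ i1 ∨ ((σ i1:ℕ) < σ l ∧ (σ l:ℕ) < σ i3) ∨
        ((σ i3:ℕ) < σ l ∧ (σ l:ℕ) < σ i2) ∨ (σ i2:ℕ) < σ l := by omega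
    rcases hdisj with hr | hr | hr | hr
    · exact h20 l ⟨Or.inr (Or.inr (Or.inl ⟨rfl, hcol⟩)),
        Or.inl ⟨rfl, by rw [Fin.lt_def]; omega⟩⟩
    · exact h21 l ⟨Or.inr (Or.inr (Or.inl ⟨rfl, hcol⟩)),
        Or.inr (Or.inl ⟨rfl, by rw [Fin.lt_def]; omega, by rw [Fin.lt_def]; omega⟩)⟩
    · exact h22 l ⟨Or.inr (Or.inr (Or.inl ⟨rfl, hcol⟩)),
        Or.inr (Or.inr (Or.inl ⟨rfl, by rw [Fin.lt_def]; omega, by rw [Fin.lt_def]; omega⟩))⟩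
    · exact h23s l ⟨Or.inr (Or.inr (Or.inl ⟨rfl, hcol⟩)),
        Or.inr (Or.inr (Or.inr ⟨rfl, by rw [Fin.lt_def]; omega⟩))⟩
  have hleft : ∀ l : Fin n, (l:ℕ) < (i2:ℕ) → (σ l : ℕ) < (σ i3 : ℕ) := by
    intro l hl
    by_cases hli1 : (l:ℕ) = (i1:ℕ)
    · have : l = i1 := Fin.ext hli1
      rw [this]; omega
    · have hne2 : (σ l : ℕ) ≠ (σ i2 : ℕ) := fun hc => by
        have := fin_val_eq_of_apply_eq σ hc; omega
      have hne3 : (σ l : ℕ) ≠ (σ i3 : ℕ) := fun hc => by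
        have := fin_val_eq_of_apply_eq σ hc; omega
      by_contra hge
      have hcol : (l < i1) ∨ (i1 < l ∧ l < i2) := by
        rcases Nat.lt_or_ge (l:ℕ) (i1:ℕ) with hc | hc
        · left; rw [Fin.lt_def]; omega
        · right; constructor <;> (rw [Fin.lt_def]; omega)
      have hrow : ((σ i3:ℕ) < σ l ∧ (σ l:ℕ) < σ i2) ∨ (σ i2:ℕ) < σ l := by omega
      rcases hcol with hc | hc <;> rcases hrow with hr | hr
      · exact h02 l ⟨Or.inl ⟨rfl, hc⟩,
          Or.inr (Or.inr (Or.inl ⟨rfl, by rw [Fin.lt_def]; omega, by rw [Fin.lt_def]; omega⟩))⟩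
      · exact h03 l ⟨Or.inl ⟨rfl, hc⟩,
          Or.inr (Or.inr (Or.inr ⟨rfl, by rw [Fin.lt_def]; omega⟩))⟩
      · exact h12s l ⟨Or.inr (Or.inl ⟨rfl, hc⟩),
          Or.inr (Or.inr (Or.inl ⟨rfl, by rw [Fin.lt_def]; omega, by rw [Fin.lt_def]; omega⟩))⟩
      · exact h13s l ⟨Or.inr (Or.inl ⟨rfl, hc⟩),
          Or.inr (Or.inr (Or.inr ⟨rfl, by rw [Fin.lt_def]; omega⟩))⟩
  have hstep3 : (σ i2 : ℕ) = (σ i3 : ℕ) + 1 := by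
    by_contra hne
    set w : Fin n := ⟨(σ i3:ℕ)+1, by have := (σ i2).isLt; omega⟩ with hw
    set l : Fin n := σ.symm w with hld
    have hlv : (σ l : ℕ) = (σ i3:ℕ)+1 := by rw [hld, Equiv.apply_symm_apply]
    have hne1 : (l:ℕ) ≠ (i1:ℕ) := fun hc => by
      have : l = i1 := Fin.ext hc
      rw [this] at hlv; omega
    have hne2 : (l:ℕ) ≠ (i2:ℕ) := fun hc => by
      have : l = i2 := Fin.ext hc
      rw [this] at hlv; omega
    have hne3 : (l:ℕ) ≠ (i3:ℕ) := fun hc => by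
      have : l = i3 := Fin.ext hc
      rw [this] at hlv; omega
    by_cases hpos : (l:ℕ) < (i2:ℕ)
    · have := hleft l hpos; omega
    · have hcol : i3 < l := by rw [Fin.lt_def]; omega
      exact h32 l ⟨Or.inr (Or.inr (Or.inr ⟨rfl, hcol⟩)),
        Or.inr (Or.inr (Or.inl ⟨rfl, by rw [Fin.lt_def]; omega, by rw [Fin.lt_def]; omega⟩))⟩
  have hstep4 : ∃ l0 : Fin n, (l0:ℕ) < (i2:ℕ) ∧ (σ l0 : ℕ) = (σ i3 : ℕ) - 1 := by
    set w : Fin n := ⟨(σ i3:ℕ)-1, by have := (σ i3).isLt; omega⟩ with hw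
    set l : Fin n := σ.symm w with hld
    have hlv : (σ l : ℕ) = (σ i3:ℕ)-1 := by rw [hld, Equiv.apply_symm_apply]
    by_cases hpos : (l:ℕ) < (i2:ℕ)
    · exact ⟨l, hpos, hlv⟩
    · exfalso
      have hne1 : (l:ℕ) ≠ (i1:ℕ) := fun hc => by
        have : l = i1 := Fin.ext hc
        omega
      have hv1 : (σ i1 : ℕ) ≠ (σ l : ℕ) := fun hc => by
        have := fin_val_eq_of_apply_eq σ hc; omega
      have hne2 : (l:ℕ) ≠ (i2:ℕ) := fun hc => by
        have : l = i2 := Fin.ext hc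
        rw [this] at hlv; omega
      have hne3 : (l:ℕ) ≠ (i3:ℕ) := fun hc => by
        have : l = i3 := Fin.ext hc
        rw [this] at hlv; omega
      have hcol : i3 < l := by rw [Fin.lt_def]; omega
      exact h31 l ⟨Or.inr (Or.inr (Or.inr ⟨rfl, hcol⟩)),
        Or.inr (Or.inl ⟨rfl, by rw [Fin.lt_def]; omega, by rw [Fin.lt_def]; omega⟩)⟩
  obtain ⟨l0, hl0, hl0v⟩ := hstep4
  have hPM : PM σ (i2:ℕ) = (σ i3 : ℕ) - 1 := by
    apply le_antisymm
    · apply Finset.sup_le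
      intro z hz
      have hzlt := (mem_filter.1 hz).2
      have := hleft z hzlt
      omega
    · have := PM_le σ (i2:ℕ) l0 hl0
      omega
  refine ⟨(i2:ℕ)-1, ?_, ?_⟩
  · rw [Finset.mem_range]
    have := i3.isLt
    omega
  · have hi2 : (i2:ℕ)-1+1 = (i2:ℕ) := by omega
    rw [hi2]
    refine ⟨by omega, i2, i3, rfl, by omega, ?_, ?_⟩
    · rw [hPM]; omega
    · rw [hPM]; omega

lemma occ_backward (σ : Perm (Fin n)) (j : ℕ) (hj : j ∈ Finset.range (n-2))
    (h : FC σ (j+1)) : ∃ i1 i2 i3 : Fin n, Occ132 cellsP σ i1 i2 i3 := by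
  obtain ⟨-, x, y, hx, hy, hvx, hvy⟩ := h
  rw [Finset.mem_range] at hj
  set t := j + 1 with htd
  have hyn := y.isLt
  have hfne : (Finset.univ.filter (fun z : Fin n => (z:ℕ) < t)).Nonempty := by
    refine ⟨⟨0, by omega⟩, ?_⟩
    simp; omega
  obtain ⟨i1, hi1mem, hi1⟩ := Finset.exists_mem_eq_sup _ hfne (fun z : Fin n => (σ z : ℕ))
  have hi1t : (i1:ℕ) < t := (mem_filter.1 hi1mem).2
  have hv1 : (σ i1 : ℕ) = PM σ t := hi1.symm
  have hLl : ∀ l : Fin n, (l:ℕ) < t → (σ l : ℕ) ≤ PM σ t := fun l hl => PM_le σ t l hl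
  refine ⟨i1, x, y, by rw [Fin.lt_def]; omega, by rw [Fin.lt_def]; omega,
    by rw [Fin.lt_def]; omega, by rw [Fin.lt_def]; omega, ?_⟩
  intro c hc l hreg
  simp only [cellsP, List.mem_cons, List.not_mem_nil, or_false] at hc
  obtain ⟨hcol, hrow⟩ := hreg
  rcases hc with rfl|rfl|rfl|rfl|rfl|rfl|rfl|rfl|rfl|rfl <;>
    (norm_num at hcol hrow; simp only [Fin.lt_def] at hcol hrow) <;>
    first
      | omega
      | (rcases hcol with hcol | hcol <;>
          (have := hLl l (by omega); omega))
      | (have := hLl l (by omega); omega)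

lemma avoid_iff (σ : Perm (Fin n)) :
    Avoid132 cellsP σ ↔ ∀ j ∈ Finset.range (n-2), ¬ FC σ (j+1) := by
  constructor
  · intro h j hj hFC
    exact h (occ_backward σ j hj hFC)
  · rintro h ⟨i1, i2, i3, hocc⟩
    obtain ⟨j, hj, hFC⟩ := occ_forward σ i1 i2 i3 hocc
    exact h j hj hFC

end Char

section Final

instance : DecidablePred NoTwo := fun S =>
  decidable_of_iff (∀ x ∈ S, x + 1 ∉ S) Iff.rfl

def w (n : ℕ) (S : Finset ℕ) : ℤ :=
  (-1)^S.card * (if NoTwo S then ((n - 2*S.card).factorial : ℤ) else 0)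

lemma evalF (n : ℕ) (S : Finset ℕ) (hS : S ⊆ Finset.range (n-2)) :
    ((Nat.card {σ : Perm (Fin n) // ∀ j ∈ S, FC σ (j+1)} : ℕ) : ℤ)
      = (if NoTwo S then ((n - 2*S.card).factorial : ℤ) else 0) := by
  by_cases h : NoTwo S
  · rw [if_pos h, countF S.card n S rfl
      (fun j hj => by have := Finset.mem_range.1 (hS hj); omega) h]
  · rw [if_neg h]
    unfold NoTwo at h
    push_neg at h
    obtain ⟨j0, hj0, hj1⟩ := h
    rw [zeroF n S j0 hj0 hj1]
    rfl

lemma evalE (n : ℕ) (S : Finset ℕ) (hS : S ⊆ Finset.range (n-1)) :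
    ((Nat.card {π : Perm (Fin n) // ∀ i ∈ S, EC π i} : ℕ) : ℤ)
      = (if NoTwo S then ((n - 2*S.card).factorial : ℤ) else 0) := by
  by_cases h : NoTwo S
  · rw [if_pos h, countE S.card n S rfl
      (fun i hi => by have := Finset.mem_range.1 (hS hi); omega) h]
  · rw [if_neg h]
    unfold NoTwo at h
    push_neg at h
    obtain ⟨i0, hi0, hi1⟩ := h
    rw [zeroE n S i0 hi0 hi1]
    rfl

lemma masterF (n : ℕ) :
    ((Nat.card {σ : Perm (Fin n) // ∀ j ∈ Finset.range (n-2), ¬ FC σ (j+1)} : ℕ) : ℤ)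
      = ∑ S ∈ (Finset.range (n-2)).powerset, w n S := by
  rw [IE (Finset.range (n-2)) (fun t (σ : Perm (Fin n)) => FC σ (t+1))]
  apply Finset.sum_congr rfl
  intro S hS
  rw [Finset.mem_powerset] at hS
  rw [evalF n S hS, w]

lemma masterE (n : ℕ) :
    ((Nat.card {π : Perm (Fin n) // ∀ i ∈ Finset.range (n-1), ¬ EC π i} : ℕ) : ℤ)
      = ∑ S ∈ (Finset.range (n-1)).powerset, w n S := by
  rw [IE (Finset.range (n-1)) (fun t (π : Perm (Fin n)) => EC π t)]
  apply Finset.sum_congr rfl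
  intro S hS
  rw [Finset.mem_powerset] at hS
  rw [evalE n S hS, w]

lemma split_sum (n : ℕ) (hn : 2 ≤ n) :
    ∑ S ∈ (Finset.range (n-2)).powerset, w n S
      = ∑ S ∈ (Finset.range (n-1)).powerset, w n S
        + ∑ S ∈ (Finset.range (n-2-1)).powerset, w (n-2) S := by
  have h1 : n-1 = (n-2)+1 := by omega
  have hnot : (n-2) ∉ Finset.range (n-2) := by simp
  rw [h1, Finset.range_add_one, Finset.powerset_insert, Finset.sum_union, Finset.sum_image]
  · have hkey : ∑ S ∈ (Finset.range (n-2)).powerset, w n (insert (n-2) S)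
        = - ∑ S ∈ (Finset.range (n-2-1)).powerset, w (n-2) S := by
      have hsub : (Finset.range (n-2-1)).powerset ⊆ (Finset.range (n-2)).powerset :=
        Finset.powerset_mono.2 (Finset.range_subset_range.2 (by omega))
      rw [← Finset.sum_subset hsub]
      · rw [← Finset.sum_neg_distrib]
        apply Finset.sum_congr rfl
        intro S hS
        rw [Finset.mem_powerset] at hS
        have hSn2 : (n-2) ∉ S := by
          intro hc
          have := Finset.mem_range.1 (hS hc)
          omega
        have hcard : (insert (n-2) S).card = S.card + 1 := Finset.card_insert_of_notMem hSn2
        have hNT : NoTwo (insert (n-2) S) ↔ NoTwo S := by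
          constructor
          · intro h x hx hc
            exact h x (Finset.mem_insert_of_mem hx) (Finset.mem_insert_of_mem hc)
          · intro h x hx hc
            rcases Finset.mem_insert.1 hx with rfl | hx'
            · rcases Finset.mem_insert.1 hc with he | hc'
              · omega
              · have := Finset.mem_range.1 (hS hc'); omega
            · rcases Finset.mem_insert.1 hc with he | hc'
              · have := Finset.mem_range.1 (hS hx'); omega
              · exact h x hx' hc'
        unfold w
        rw [hcard]
        simp only [hNT]
        have hfac : n - 2*(S.card+1) = (n-2) - 2*S.card := by omega
        rw [hfac, pow_succ]
        ring
      · intro S hSmem hSnot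
        rw [Finset.mem_powerset] at hSmem hSnot
        have : ∃ x ∈ S, x ∉ Finset.range (n-2-1) := by
          by_contra hc
          push_neg at hc
          exact hSnot hc
        obtain ⟨x, hxS, hxnot⟩ := this
        have hx1 := Finset.mem_range.1 (hSmem hxS)
        have hx2 : ¬ x < n-2-1 := fun hc => hxnot (Finset.mem_range.2 hc)
        have hnt : ¬ NoTwo (insert (n-2) S) := by
          intro hNT
          have hxin : x ∈ insert (n-2) S := Finset.mem_insert_of_mem hxS
          have hx3 : x + 1 = n-2 := by omega
          exact hNT x hxin (hx3 ▸ Finset.mem_insert_self (n-2) S)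
        unfold w
        rw [if_neg hnt, mul_zero]
    rw [hkey]
    ring
  · intro x hx y hy hxy
    have hxn : (n-2) ∉ x := fun hc => hnot (Finset.mem_powerset.1 hx hc)
    have hyn : (n-2) ∉ y := fun hc => hnot (Finset.mem_powerset.1 hy hc)
    rw [← Finset.erase_insert hxn, ← Finset.erase_insert hyn, hxy]
  · rw [Finset.disjoint_left]
    intro S hS hS'
    have h1 : (n-2) ∉ S := fun hc => hnot (Finset.mem_powerset.1 hS hc)
    obtain ⟨T, _, rfl⟩ := Finset.mem_image.1 hS'
    exact h1 (Finset.mem_insert_self _ _)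

end Final
end MeshAux

/-- For `n ≥ 2`, the number of permutations of `{1,…,n}` avoiding the mesh pattern `p`
equals `a₂(n,0) + a₂(n-2,0)`, where `a₂(m,0)` is the number of permutations of
`{1,…,m}` with no adjacent transposition in their cycle decomposition. -/
theorem card_avoiders_p_eq (n : ℕ) (hn : 2 ≤ n) :
    Nat.card {σ : Equiv.Perm (Fin n) // Avoid132 cellsP σ} =
      Nat.card {π : Equiv.Perm (Fin n) // ∀ i : ℕ, ¬ IsAdjCycle 2 π i} +
      Nat.card {π : Equiv.Perm (Fin (n - 2)) // ∀ i : ℕ, ¬ IsAdjCycle 2 π i} := by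
  have eA : Nat.card {σ : Equiv.Perm (Fin n) // Avoid132 cellsP σ}
      = Nat.card {σ : Equiv.Perm (Fin n) // ∀ j ∈ Finset.range (n-2), ¬ MeshAux.FC σ (j+1)} :=
    Nat.card_congr (Equiv.subtypeEquivRight (fun σ => MeshAux.avoid_iff σ))
  have eB : Nat.card {π : Equiv.Perm (Fin n) // ∀ i : ℕ, ¬ IsAdjCycle 2 π i}
      = Nat.card {π : Equiv.Perm (Fin n) // ∀ i ∈ Finset.range (n-1), ¬ MeshAux.EC π i} :=
    Nat.card_congr (Equiv.subtypeEquivRight (fun π => MeshAux.allAdj_iff π))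
  have eC : Nat.card {π : Equiv.Perm (Fin (n-2)) // ∀ i : ℕ, ¬ IsAdjCycle 2 π i}
      = Nat.card {π : Equiv.Perm (Fin (n-2)) // ∀ i ∈ Finset.range (n-2-1), ¬ MeshAux.EC π i} :=
    Nat.card_congr (Equiv.subtypeEquivRight (fun π => MeshAux.allAdj_iff π))
  have hZ : ((Nat.card {σ : Equiv.Perm (Fin n) // Avoid132 cellsP σ} : ℕ) : ℤ)
      = ((Nat.card {π : Equiv.Perm (Fin n) // ∀ i : ℕ, ¬ IsAdjCycle 2 π i} : ℕ) : ℤ)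
        + ((Nat.card {π : Equiv.Perm (Fin (n-2)) // ∀ i : ℕ, ¬ IsAdjCycle 2 π i} : ℕ) : ℤ) := by
    rw [eA, eB, eC, MeshAux.masterF n, MeshAux.masterE n, MeshAux.masterE (n-2),
      MeshAux.split_sum n hn]
  exact_mod_cast hZ
end

section
/- For every n ≥ 1, Foata's fundamental transformation is a bijection from the set of permutations of {1,...,n} to itself. -/
namespace FoataAux

open Equiv Function List Classical

variable {n : ℕ}

/-- `m` is the minimum of its `π`-orbit. -/
def IsMin (π : Equiv.Perm (Fin n)) (m : Fin n) : Prop := ∀ k : ℕ, m ≤ (π ^ k) m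

/-- The cycle of `m`, written starting from `m`. -/
noncomputable def cyc (π : Equiv.Perm (Fin n)) (m : Fin n) : List (Fin n) :=
  (List.range (Function.minimalPeriod (⇑π) m)).map (fun k => (π ^ k) m)

open Classical in
/-- The list of cycle minima, in decreasing order. -/
noncomputable def starts (π : Equiv.Perm (Fin n)) : List (Fin n) :=
  ((List.finRange n).filter (fun m => decide (∀ k : ℕ, m ≤ (π ^ k) m))).reverse

/-- Concatenation of the cycles of the elements of `S`. -/
noncomputable def wordOf (π : Equiv.Perm (Fin n)) (S : List (Fin n)) : List (Fin n) :=
  S.flatMap (cyc π)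

lemma foataWord_eq (π : Equiv.Perm (Fin n)) : foataWord π = wordOf π (starts π) := rfl

lemma per_pos (π : Equiv.Perm (Fin n)) (m : Fin n) :
    0 < Function.minimalPeriod (⇑π) m := by
  apply Function.IsPeriodicPt.minimalPeriod_pos (orderOf_pos π)
  show (⇑π)^[orderOf π] m = m
  simp [Equiv.Perm.iterate_eq_pow, pow_orderOf_eq_one]

lemma pow_minimalPeriod (π : Equiv.Perm (Fin n)) (m : Fin n) :
    (π ^ Function.minimalPeriod (⇑π) m) m = m := by
  have h := Function.iterate_minimalPeriod (f := ⇑π) (x := m)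
  simp only [Equiv.Perm.iterate_eq_pow] at h
  exact h

lemma pow_mod (π : Equiv.Perm (Fin n)) (m : Fin n) (k : ℕ) :
    (π ^ (k % Function.minimalPeriod (⇑π) m)) m = (π ^ k) m := by
  have h := Function.iterate_mod_minimalPeriod_eq (f := ⇑π) (x := m) (n := k)
  simp only [Equiv.Perm.iterate_eq_pow] at h
  exact h

lemma cyc_length (π : Equiv.Perm (Fin n)) (m : Fin n) :
    (cyc π m).length = Function.minimalPeriod (⇑π) m := by
  simp [cyc]

lemma cyc_getElem (π : Equiv.Perm (Fin n)) (m : Fin n) (k : ℕ)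
    (h : k < Function.minimalPeriod (⇑π) m) :
    (cyc π m)[k]'(by simpa [cyc_length] using h) = (π ^ k) m := by
  simp [cyc]

lemma cyc_eq_cons (π : Equiv.Perm (Fin n)) (m : Fin n) :
    ∃ t, cyc π m = m :: t := by
  obtain ⟨q, hq⟩ : ∃ q, Function.minimalPeriod (⇑π) m = q + 1 :=
    ⟨_, (Nat.succ_pred_eq_of_pos (per_pos π m)).symm⟩
  refine ⟨((List.range q).map (fun k => (π ^ (k + 1)) m)), ?_⟩
  simp [cyc, hq, List.range_succ_eq_map, List.map_map, Function.comp_def]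

lemma cyc_ne_nil (π : Equiv.Perm (Fin n)) (m : Fin n) : cyc π m ≠ [] := by
  obtain ⟨t, ht⟩ := cyc_eq_cons π m
  simp [ht]

lemma mem_cyc {π : Equiv.Perm (Fin n)} {m x : Fin n} :
    x ∈ cyc π m ↔ ∃ k : ℕ, (π ^ k) m = x := by
  constructor
  · rintro h
    simp only [cyc, List.mem_map, List.mem_range] at h
    obtain ⟨k, _, hk⟩ := h
    exact ⟨k, hk⟩
  · rintro ⟨k, rfl⟩
    simp only [cyc, List.mem_map, List.mem_range]
    exact ⟨k % Function.minimalPeriod (⇑π) m,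
      Nat.mod_lt _ (per_pos π m), pow_mod π m k⟩

lemma cyc_nodup (π : Equiv.Perm (Fin n)) (m : Fin n) : (cyc π m).Nodup := by
  refine List.Nodup.map_on ?_ List.nodup_range
  intro a ha b hb hab
  simp only [List.mem_range] at ha hb
  exact Function.iterate_injOn_Iio_minimalPeriod (f := ⇑π) (x := m) ha hb
    (by simpa [Equiv.Perm.iterate_eq_pow] using hab)

lemma mem_starts {π : Equiv.Perm (Fin n)} {m : Fin n} :
    m ∈ starts π ↔ IsMin π m := by
  simp [starts, IsMin, List.mem_filter, List.mem_reverse, List.mem_finRange,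
    decide_eq_true_eq]

lemma starts_pairwise (π : Equiv.Perm (Fin n)) :
    (starts π).Pairwise (· > ·) := by
  have h := List.pairwise_lt_finRange n
  have h2 := h.filter (fun m => decide (∀ k : ℕ, m ≤ (π ^ k) m))
  simpa [starts, List.pairwise_reverse] using h2

lemma reach_symm (π : Equiv.Perm (Fin n)) {x y : Fin n} (a : ℕ) (h : (π ^ a) y = x) :
    ∃ b : ℕ, (π ^ b) x = y := by
  refine ⟨a * (orderOf π - 1), ?_⟩
  have hN : 0 < orderOf π := orderOf_pos π
  obtain ⟨N, hNe⟩ : ∃ N, orderOf π = N + 1 := ⟨_, (Nat.succ_pred_eq_of_pos hN).symm⟩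
  have key : a * (orderOf π - 1) + a = orderOf π * a := by
    rw [hNe, Nat.add_sub_cancel]; ring
  rw [← h, ← Equiv.Perm.mul_apply, ← pow_add, key, pow_mul, pow_orderOf_eq_one, one_pow]
  simp

lemma isMin_unique {π : Equiv.Perm (Fin n)} {m m' x : Fin n}
    (hm : IsMin π m) (hm' : IsMin π m') (hx : x ∈ cyc π m) (hx' : x ∈ cyc π m') :
    m = m' := by
  obtain ⟨a, ha⟩ := mem_cyc.mp hx
  obtain ⟨b, hb⟩ := mem_cyc.mp hx'
  obtain ⟨c, hc⟩ := reach_symm π b hb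
  obtain ⟨c', hc'⟩ := reach_symm π a ha
  have h1 : m ≤ m' := by
    have := hm (c + a)
    rwa [pow_add, Equiv.Perm.mul_apply, ha, hc] at this
  have h2 : m' ≤ m := by
    have := hm' (c' + b)
    rwa [pow_add, Equiv.Perm.mul_apply, hb, hc'] at this
  exact le_antisymm h1 h2

lemma exists_start (π : Equiv.Perm (Fin n)) (x : Fin n) :
    ∃ m, IsMin π m ∧ x ∈ cyc π m := by
  set p := Function.minimalPeriod (⇑π) x with hp
  have hppos : 0 < p := per_pos π x
  set O : Finset (Fin n) := (Finset.range p).image (fun k => (π ^ k) x) with hO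
  have hne : O.Nonempty := by
    refine ⟨x, ?_⟩
    simp only [hO, Finset.mem_image, Finset.mem_range]
    exact ⟨0, hppos, by simp⟩
  set m := O.min' hne with hm
  have hmO : m ∈ O := O.min'_mem hne
  simp only [hO, Finset.mem_image, Finset.mem_range] at hmO
  obtain ⟨j, hj, hjm⟩ := hmO
  refine ⟨m, ?_, ?_⟩
  · intro k
    have hmem : (π ^ k) m ∈ O := by
      simp only [hO, Finset.mem_image, Finset.mem_range]
      refine ⟨(k + j) % p, Nat.mod_lt _ hppos, ?_⟩
      rw [pow_mod π x (k + j), pow_add, Equiv.Perm.mul_apply, hjm]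
    exact O.min'_le _ hmem
  · refine mem_cyc.mpr ⟨p - j, ?_⟩
    rw [← hjm, ← Equiv.Perm.mul_apply, ← pow_add, Nat.sub_add_cancel hj.le]
    exact pow_minimalPeriod π x

lemma mem_foataWord (π : Equiv.Perm (Fin n)) (x : Fin n) : x ∈ foataWord π := by
  obtain ⟨m, hm, hx⟩ := exists_start π x
  rw [foataWord_eq, wordOf]
  exact List.mem_flatMap.mpr ⟨m, mem_starts.mpr hm, hx⟩

lemma foataWord_nodup (π : Equiv.Perm (Fin n)) : (foataWord π).Nodup := by
  rw [foataWord_eq, wordOf]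
  refine List.nodup_flatMap.mpr ⟨fun m _ => cyc_nodup π m, ?_⟩
  refine List.Pairwise.imp_of_mem ?_ (starts_pairwise π)
  intro a b ha hb hab x hxa hxb
  exact absurd (isMin_unique (mem_starts.mp ha) (mem_starts.mp hb) hxa hxb)
    (ne_of_gt hab)

lemma foataWord_length (π : Equiv.Perm (Fin n)) : (foataWord π).length = n := by
  have hnd := foataWord_nodup π
  have : (foataWord π).toFinset = Finset.univ := by
    apply Finset.eq_univ_of_forall
    intro x
    simpa using mem_foataWord π x
  have hcard := List.toFinset_card_of_nodup hnd
  rw [this] at hcard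
  simpa using hcard.symm

lemma exists_perm (π : Equiv.Perm (Fin n)) :
    ∃ σ : Equiv.Perm (Fin n), List.ofFn ⇑σ = foataWord π := by
  set w := foataWord π with hw
  have hlen : w.length = n := foataWord_length π
  have hnd : w.Nodup := foataWord_nodup π
  set f : Fin n → Fin n := fun i => w.get (Fin.cast hlen.symm i) with hf
  have hinj : Function.Injective f := by
    intro a b hab
    have := List.nodup_iff_injective_get.mp hnd hab
    simpa [Fin.ext_iff] using this
  have hbij : Function.Bijective f := Finite.injective_iff_bijective.mp hinj
  refine ⟨Equiv.ofBijective f hbij, ?_⟩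
  apply List.ext_get (by simp [hlen])
  intro i h1 h2
  simp only [List.get_ofFn, Equiv.ofBijective_apply, hf]
  congr 1

open Classical in
lemma ofFn_foataPerm (π : Equiv.Perm (Fin n)) :
    List.ofFn ⇑(foataPerm π) = foataWord π := by
  have h := exists_perm π
  rw [foataPerm, dif_pos h]
  exact h.choose_spec

lemma wordOf_head {π : Equiv.Perm (Fin n)} {m : Fin n} {T : List (Fin n)} :
    ∃ r, wordOf π (m :: T) = m :: r := by
  obtain ⟨t, ht⟩ := cyc_eq_cons π m
  exact ⟨t ++ wordOf π T, by simp [wordOf, ht]⟩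

lemma takeWhile_block {α : Type*} (p : α → Bool) :
    ∀ (c r : List α), (∀ x ∈ c, p x = true) →
      (∀ y, r.head? = some y → p y = false) → (c ++ r).takeWhile p = c := by
  intro c
  induction c with
  | nil =>
    intro r _ hr
    cases r with
    | nil => simp
    | cons y r' =>
      simp only [List.nil_append]
      rw [List.takeWhile_cons_of_neg]
      simp [hr y rfl]
  | cons a c ih =>
    intro r hc hr
    simp only [List.cons_append]
    rw [List.takeWhile_cons_of_pos (hc a (by simp))]
    rw [ih r (fun x hx => hc x (by simp [hx])) hr]

open Classical in
lemma key_s9 : ∀ (S : List (Fin n)) (S' : List (Fin n)) (π π' : Equiv.Perm (Fin n)),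
    (∀ m ∈ S, IsMin π m) → (∀ m ∈ S', IsMin π' m) →
    S.Pairwise (· > ·) → S'.Pairwise (· > ·) →
    wordOf π S = wordOf π' S' → ∀ x ∈ wordOf π S, π x = π' x := by
  intro S
  induction S with
  | nil => intro S' π π' _ _ _ _ _ x hx; simp [wordOf] at hx
  | cons m T ih =>
    intro S' π π' hS hS' hP hP' hw x hx
    cases S' with
    | nil =>
      exfalso
      simp only [wordOf, List.flatMap_cons, List.flatMap_nil] at hw
      exact cyc_ne_nil π m (List.append_eq_nil_iff.mp hw).1
    | cons m' T' =>
      -- heads agree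
      obtain ⟨r, hr⟩ := wordOf_head (π := π) (m := m) (T := T)
      obtain ⟨r', hr'⟩ := wordOf_head (π := π') (m := m') (T := T')
      have hmm' : m = m' := by
        have := hw
        rw [hr, hr'] at this
        exact (List.cons.injEq _ _ _ _).mp this |>.1
      subst hmm'
      -- the first blocks agree
      have hwapp : cyc π m ++ wordOf π T = cyc π' m ++ wordOf π' T' := by
        simpa [wordOf, List.flatMap_cons] using hw
      have hhead : ∀ (πa : Equiv.Perm (Fin n)) (Ta : List (Fin n)),
          ((m :: Ta).Pairwise (· > ·)) →
          ∀ y, (wordOf πa Ta).head? = some y → decide (m ≤ y) = false := by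
        intro πa Ta hpa y hy
        cases Ta with
        | nil => simp [wordOf] at hy
        | cons m₂ T₂ =>
          obtain ⟨r₂, hr₂⟩ := wordOf_head (π := πa) (m := m₂) (T := T₂)
          rw [hr₂] at hy
          simp only [List.head?_cons, Option.some.injEq] at hy
          subst hy
          have : m > m₂ := (List.pairwise_cons.mp hpa).1 m₂ (by simp)
          simp [not_le.mpr this]
      have hblock : cyc π m = cyc π' m := by
        have h1 : (cyc π m ++ wordOf π T).takeWhile (fun x => decide (m ≤ x)) = cyc π m := by
          apply takeWhile_block
          · intro x hx
            obtain ⟨k, rfl⟩ := mem_cyc.mp hx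
            simp [hS m (by simp) k]
          · exact hhead π T hP
        have h2 : (cyc π' m ++ wordOf π' T').takeWhile (fun x => decide (m ≤ x)) = cyc π' m := by
          apply takeWhile_block
          · intro x hx
            obtain ⟨k, rfl⟩ := mem_cyc.mp hx
            simp [hS' m (by simp) k]
          · exact hhead π' T' hP'
        rw [← h1, ← h2, hwapp]
      have hper : Function.minimalPeriod (⇑π) m = Function.minimalPeriod (⇑π') m := by
        have := congrArg List.length hblock
        simpa [cyc_length] using this
      have hk : ∀ k, k < Function.minimalPeriod (⇑π) m → (π ^ k) m = (π' ^ k) m := by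
        intro k hkp
        have h1 := cyc_getElem π m k hkp
        have h2 := cyc_getElem π' m k (hper ▸ hkp)
        rw [← h1, ← h2]
        exact List.getElem_of_eq hblock _
      -- agreement on the first block
      have hagree : ∀ y ∈ cyc π m, π y = π' y := by
        intro y hy
        obtain ⟨k, hkp, rfl⟩ : ∃ k, k < Function.minimalPeriod (⇑π) m ∧ (π ^ k) m = y := by
          have := hy
          simp only [cyc, List.mem_map, List.mem_range] at this
          obtain ⟨k, hk1, hk2⟩ := this
          exact ⟨k, hk1, hk2⟩
        have hstep : π ((π ^ k) m) = (π ^ (k + 1)) m := by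
          rw [pow_succ', Equiv.Perm.mul_apply]
        have hstep' : π' ((π' ^ k) m) = (π' ^ (k + 1)) m := by
          rw [pow_succ', Equiv.Perm.mul_apply]
        rw [hstep, hk k hkp, hstep']
        rcases Nat.lt_or_ge (k + 1) (Function.minimalPeriod (⇑π) m) with hlt | hge
        · exact hk (k + 1) hlt
        · have hkeq : k + 1 = Function.minimalPeriod (⇑π) m := le_antisymm hkp hge
          rw [hkeq, pow_minimalPeriod π m, hper, pow_minimalPeriod π' m]
      -- tails agree
      have htail : wordOf π T = wordOf π' T' := by
        rw [hblock] at hwapp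
        exact List.append_cancel_left hwapp
      -- conclude
      rw [wordOf, List.flatMap_cons, List.mem_append] at hx
      rcases hx with hx | hx
      · exact hagree x hx
      · exact ih T' π π' (fun a ha => hS a (by simp [ha]))
          (fun a ha => hS' a (by simp [ha])) hP.of_cons hP'.of_cons htail x hx

lemma foataWord_injective {π π' : Equiv.Perm (Fin n)}
    (h : foataWord π = foataWord π') : π = π' := by
  refine Equiv.ext fun x => ?_
  rw [foataWord_eq, foataWord_eq] at h
  exact key_s9 (starts π) (starts π') π π'
    (fun m hm => mem_starts.mp hm) (fun m hm => mem_starts.mp hm)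
    (starts_pairwise π) (starts_pairwise π') h x
    (by rw [← foataWord_eq]; exact mem_foataWord π x)

end FoataAux

/-- For every `n ≥ 1`, Foata's fundamental transformation is a bijection on the set of
permutations of `{1,…,n}`. -/
theorem foata_bijective (n : ℕ) (hn : 1 ≤ n) :
    Function.Bijective (foataPerm (n := n)) := by
  rw [← Finite.injective_iff_bijective]
  intro π π' h
  apply FoataAux.foataWord_injective
  rw [← FoataAux.ofFn_foataPerm π, ← FoataAux.ofFn_foataPerm π', h]
end
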